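/- arXiv:1309.2574 — 4 statements merged into one kernel-verified Lean document; each statement's English description precedes it below -/
import Mathlib

section
/- Let P = (1/(n−1))(𝟏𝟏^T − I) and suppose the attractive and repulsive Laplacians satisfy L_att + L_rep = L_{K_n}/(n−1) (the weighted complete-graph Laplacian). Fix α ∈ (0,1]. Then the spectral radius of (I − 𝟏𝟏^T/n)(I − (α/n)L_att + (β/n)L_rep) is less than 1 if and only if β < max{(n/((n−1)λ_max(L_rep)) − 1)α, 0}, and greater than 1 when β exceeds this threshold, where L_rep ≠ 0 is symmetric. -/
open Matrix

/-- The spectral radius of a real matrix: the supremum of the absolute values of its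
complex eigenvalues. -/
noncomputable def specRad {n : ℕ} (A : Matrix (Fin n) (Fin n) ℝ) : ℝ :=
  sSup {r : ℝ | ∃ μ ∈ spectrum ℂ (A.map Complex.ofReal), r = ‖μ‖}

lemma specRealIff {n : ℕ} (A : Matrix (Fin n) (Fin n) ℝ) (μ : ℝ) :
    (μ:ℂ) ∈ spectrum ℂ (A.map Complex.ofReal) ↔ μ ∈ spectrum ℝ A := by
  rw [spectrum.mem_iff, spectrum.mem_iff, not_iff_not]
  have hmap : ((algebraMap ℝ (Matrix (Fin n) (Fin n) ℝ) μ) - A).map Complex.ofReal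
      = algebraMap ℂ (Matrix (Fin n) (Fin n) ℂ) (μ:ℂ) - A.map Complex.ofReal := by
    rw [Matrix.map_sub _ Complex.ofReal_sub]
    congr 1
    rw [algebraMap_eq_diagonal, algebraMap_eq_diagonal, diagonal_map (by simp)]
    simp [Function.comp]
  have hdet : ∀ (M : Matrix (Fin n) (Fin n) ℝ),
      (M.map Complex.ofReal).det = Complex.ofReal M.det :=
    fun M => (RingHom.map_det Complex.ofRealHom M).symm
  rw [Matrix.isUnit_iff_isUnit_det, Matrix.isUnit_iff_isUnit_det, isUnit_iff_ne_zero,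
    isUnit_iff_ne_zero, ← hmap, hdet]
  simp

lemma memSpecOfEigen {n : ℕ} {A : Matrix (Fin n) (Fin n) ℝ} {μ : ℝ} {v : Fin n → ℝ}
    (hv : v ≠ 0) (h : A *ᵥ v = μ • v) : μ ∈ spectrum ℝ A := by
  rw [spectrum.mem_iff, Matrix.isUnit_iff_isUnit_det, isUnit_iff_ne_zero, ne_eq, not_not]
  rw [← Matrix.exists_mulVec_eq_zero_iff]
  refine ⟨v, hv, ?_⟩
  rw [Algebra.algebraMap_eq_smul_one, sub_mulVec, smul_mulVec, one_mulVec, h, sub_self]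

lemma isHermitianOfSymm {n : ℕ} {A : Matrix (Fin n) (Fin n) ℝ} (hA : A.IsSymm) :
    A.IsHermitian := by
  rw [Matrix.IsHermitian, conjTranspose_eq_transpose_of_trivial]
  exact hA

lemma quadBound {n : ℕ} {A : Matrix (Fin n) (Fin n) ℝ} (hA : A.IsHermitian) {m : ℝ}
    (hm : ∀ i, hA.eigenvalues i ≤ m) (v : Fin n → ℝ) :
    v ⬝ᵥ (A *ᵥ v) ≤ m * (v ⬝ᵥ v) := by
  classical
  set U : Matrix (Fin n) (Fin n) ℝ := (hA.eigenvectorUnitary : Matrix (Fin n) (Fin n) ℝ) with hU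
  have hUU : U * Uᵀ = 1 := by
    have := (Matrix.mem_unitaryGroup_iff).mp hA.eigenvectorUnitary.2
    rwa [star_eq_conjTranspose, conjTranspose_eq_transpose_of_trivial] at this
  set w : Fin n → ℝ := Uᵀ *ᵥ v with hw
  have h1 : v ⬝ᵥ (A *ᵥ v) = w ⬝ᵥ (diagonal (RCLike.ofReal ∘ hA.eigenvalues) *ᵥ w) := by
    conv_lhs => rw [hA.spectral_theorem, Unitary.conjStarAlgAut_apply]
    rw [star_eq_conjTranspose, conjTranspose_eq_transpose_of_trivial,
      ← mulVec_mulVec, ← mulVec_mulVec, dotProduct_mulVec v U, hw, mulVec_transpose]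
  have h2 : w ⬝ᵥ w = v ⬝ᵥ v := by
    rw [hw, mulVec_transpose, ← dotProduct_mulVec, ← mulVec_transpose, mulVec_mulVec, hUU,
      one_mulVec]
  have h3 : w ⬝ᵥ (diagonal (RCLike.ofReal ∘ hA.eigenvalues) *ᵥ w)
      = ∑ i, hA.eigenvalues i * (w i * w i) := by
    simp [dotProduct, mulVec_diagonal]
    congr 1; funext i; ring
  rw [h1, h3, ← h2]
  have h4 : (m : ℝ) * (w ⬝ᵥ w) = ∑ i, m * (w i * w i) := by
    simp [dotProduct, Finset.mul_sum]
  rw [h4]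
  exact Finset.sum_le_sum fun i _ => mul_le_mul_of_nonneg_right (hm i) (mul_self_nonneg _)

lemma specComplexEq {n : ℕ} {A : Matrix (Fin n) (Fin n) ℝ} (hA : A.IsSymm) :
    spectrum ℂ (A.map Complex.ofReal) = Complex.ofReal '' spectrum ℝ A := by
  classical
  have hAc : (A.map Complex.ofReal).IsHermitian := by
    rw [Matrix.IsHermitian]
    ext i j
    simp [conjTranspose_apply, Matrix.map_apply, ← hA.apply i j]
  have hrange : spectrum ℂ (A.map Complex.ofReal)
      = Set.range (Complex.ofReal ∘ hAc.eigenvalues) := by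
    conv_lhs => rw [hAc.spectral_theorem, Unitary.conjStarAlgAut_apply, Unitary.spectrum_star_right_conjugate,
      spectrum_diagonal]
    rfl
  ext μ
  constructor
  · intro h
    obtain ⟨i, hi⟩ := hrange ▸ h
    refine ⟨hAc.eigenvalues i, (specRealIff A _).mp ?_, hi⟩
    rw [show ((hAc.eigenvalues i : ℝ) : ℂ) = μ from hi]
    exact h
  · rintro ⟨e, he, rfl⟩
    exact (specRealIff A e).mpr he

lemma dotSelfPos {n : ℕ} {v : Fin n → ℝ} (hv : v ≠ 0) : 0 < v ⬝ᵥ v := by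
  have h0 : 0 ≤ v ⬝ᵥ v := Finset.sum_nonneg fun i _ => mul_self_nonneg _
  rcases h0.lt_or_eq with h | h
  · exact h
  · exact absurd (dotProduct_self_eq_zero.mp h.symm) hv


lemma arithAux (ν α β L βstar : ℝ) (hν3 : 3 ≤ ν) (hα0 : 0 < α) (hα1 : α ≤ 1) (hβ : 0 ≤ β)
    (hL : 0 < L) (hβstar : βstar = max ((ν / ((ν - 1) * L) - 1) * α) 0) :
    (1 - α/(ν-1) + (α+β)/ν * L < 1 ↔ β < βstar) ∧
    (βstar < β → 1 < 1 - α/(ν-1) + (α+β)/ν * L) := by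
  have hν0 : (0:ℝ) < ν := by linarith
  have hν1 : (0:ℝ) < ν - 1 := by linarith
  have hdenpos : (0:ℝ) < ν * (ν - 1) := mul_pos hν0 hν1
  have hkey : 1 - α/(ν-1) + (α+β)/ν * L - 1 = ((α+β)*L*(ν-1) - α*ν)/(ν*(ν-1)) := by
    field_simp
    ring
  have hiff1 : 1 - α/(ν-1) + (α+β)/ν * L < 1 ↔ (α+β)*L*(ν-1) < α*ν := by
    rw [← sub_neg, hkey, div_neg_iff]
    constructor
    · rintro (⟨h, h'⟩ | ⟨_, h⟩)
      · linarith
      · linarith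
    · intro h
      right
      exact ⟨by linarith, hdenpos⟩
  have hiff2 : 1 < 1 - α/(ν-1) + (α+β)/ν * L ↔ α*ν < (α+β)*L*(ν-1) := by
    rw [← sub_pos, hkey, div_pos_iff]
    constructor
    · rintro (⟨h, _⟩ | ⟨_, h⟩)
      · linarith
      · linarith
    · intro h
      left
      exact ⟨by linarith, hdenpos⟩
  set A : ℝ := (ν / ((ν - 1) * L) - 1) * α with hA
  have hAiff : β < A ↔ (α+β)*L*(ν-1) < α*ν := by
    rw [hA, div_sub_one (ne_of_gt (mul_pos hν1 hL)), div_mul_eq_mul_div,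
      lt_div_iff₀ (mul_pos hν1 hL)]
    constructor <;> intro h <;> nlinarith
  have hAiff' : A < β ↔ α*ν < (α+β)*L*(ν-1) := by
    rw [hA, div_sub_one (ne_of_gt (mul_pos hν1 hL)), div_mul_eq_mul_div,
      div_lt_iff₀ (mul_pos hν1 hL)]
    constructor <;> intro h <;> nlinarith
  constructor
  · rw [hiff1, ← hAiff, hβstar]
    constructor
    · intro h
      exact lt_max_of_lt_left h
    · intro h
      rcases le_or_gt A 0 with hA0 | hA0
      · rw [max_eq_right hA0] at h
        linarith
      · rwa [max_eq_left hA0.le] at h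
  · intro h
    rw [hβstar] at h
    rw [hiff2, ← hAiff']
    exact lt_of_le_of_lt (le_max_left A 0) h


/-- Threshold for the complete graph: let `P = (𝟏𝟏ᵀ − I)/(n−1)` and suppose the attractive
and repulsive Laplacians satisfy `L_att + L_rep = L_{K_n}/(n−1)`, with `L_rep ≠ 0` symmetric
(PSD Laplacian). Fix `α ∈ (0,1]`. Then the spectral radius of
`(I − 𝟏𝟏ᵀ/n)(I − (α/n)L_att + (β/n)L_rep)` is `< 1` iff
`β < β⋆ = max{(n/((n−1)λ_max(L_rep)) − 1)α, 0}`, and is `> 1` when `β > β⋆`. -/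
theorem stmt7 {n : ℕ} (hn : 3 ≤ n)
    (α β : ℝ) (hα : 0 < α ∧ α ≤ 1) (hβ : 0 ≤ β)
    (Latt Lrep LK J : Matrix (Fin n) (Fin n) ℝ)
    (hLK : LK = (n : ℝ) • (1 : Matrix (Fin n) (Fin n) ℝ)
            - Matrix.of (fun _ _ : Fin n => (1 : ℝ)))
    (hJ : J = (n : ℝ)⁻¹ • Matrix.of (fun _ _ : Fin n => (1 : ℝ)))
    (hrepSymm : Lrep.IsSymm)
    (hrepPSD : ∀ z : Fin n → ℝ, 0 ≤ z ⬝ᵥ (Lrep *ᵥ z))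
    (hrepKer : Lrep *ᵥ (fun _ => 1) = 0)
    (hrepNe : Lrep ≠ 0)
    (hattSymm : Latt.IsSymm)
    (hattPSD : ∀ z : Fin n → ℝ, 0 ≤ z ⬝ᵥ (Latt *ᵥ z))
    (hattKer : Latt *ᵥ (fun _ => 1) = 0)
    (hsum : Latt + Lrep = ((n : ℝ) - 1)⁻¹ • LK)
    (lamMaxRep βstar : ℝ)
    (hlam : lamMaxRep = sSup (spectrum ℝ Lrep))
    (hβstar : βstar = max (((n : ℝ) / (((n : ℝ) - 1) * lamMaxRep) - 1) * α) 0) :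
    (specRad ((1 - J) * (1 - (α / n) • Latt + (β / n) • Lrep)) < 1 ↔ β < βstar) ∧
    (βstar < β → 1 < specRad ((1 - J) * (1 - (α / n) • Latt + (β / n) • Lrep))) := by
  classical
  obtain ⟨hα0, hα1⟩ := hα
  set ν : ℝ := (n : ℝ) with hν
  have hν3 : (3:ℝ) ≤ ν := by rw [hν]; exact_mod_cast hn
  have hν0 : (0:ℝ) < ν := by linarith
  have hν1 : (0:ℝ) < ν - 1 := by linarith
  set B : Matrix (Fin n) (Fin n) ℝ := Matrix.of (fun _ _ : Fin n => (1 : ℝ)) with hB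
  -- column sums of Lrep and Latt vanish
  have hcol : ∀ (L : Matrix (Fin n) (Fin n) ℝ), L.IsSymm → (L *ᵥ (fun _ => 1) = 0) →
      B * L = 0 := by
    intro L hLs hLk
    ext i j
    have hrow : ∑ k, L j k = 0 := by
      have := congrFun hLk j
      simpa [mulVec, dotProduct] using this
    simp only [hB, Matrix.mul_apply, Matrix.of_apply, one_mul, Matrix.zero_apply]
    calc ∑ k, L k j = ∑ k, L j k := by
          refine Finset.sum_congr rfl fun k _ => ?_
          rw [← hLs.apply]
      _ = 0 := hrow
  have hBrep : B * Lrep = 0 := hcol Lrep hrepSymm hrepKer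
  have hBatt : B * Latt = 0 := hcol Latt hattSymm hattKer
  have hJrep : J * Lrep = 0 := by rw [hJ, Matrix.smul_mul, hBrep, smul_zero]
  have hJatt : J * Latt = 0 := by rw [hJ, Matrix.smul_mul, hBatt, smul_zero]
  -- Latt in terms of (1 - J) and Lrep
  have hBJ : B = ν • J := by
    rw [hJ, smul_smul, mul_inv_cancel₀ (ne_of_gt hν0), one_smul]
  have hLatt : Latt = (ν/(ν-1)) • ((1 : Matrix (Fin n) (Fin n) ℝ) - J) - Lrep := by
    have h1 : Latt = ((ν - 1)⁻¹) • LK - Lrep := by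
      rw [← hsum]; abel
    rw [h1, hLK, hBJ, ← smul_sub, smul_smul, div_eq_mul_inv, mul_comm]
  set c : ℝ := 1 - α/(ν-1) with hc
  set t : ℝ := (α+β)/ν with ht
  set W : Matrix (Fin n) (Fin n) ℝ :=
    c • ((1 : Matrix (Fin n) (Fin n) ℝ) - J) + t • Lrep with hWdef
  have hW : (1 - J) * (1 - (α / n) • Latt + (β / n) • Lrep) = W := by
    have m1 : ((1 : Matrix (Fin n) (Fin n) ℝ) - J) * Latt = Latt := by
      rw [sub_mul, one_mul, hJatt, sub_zero]
    have m2 : ((1 : Matrix (Fin n) (Fin n) ℝ) - J) * Lrep = Lrep := by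
      rw [sub_mul, one_mul, hJrep, sub_zero]
    have e1 : (1 - J) * (1 - (α / ↑n) • Latt + (β / ↑n) • Lrep)
        = (1 : Matrix (Fin n) (Fin n) ℝ) - J - (α/ν) • Latt + (β/ν) • Lrep := by
      rw [mul_add, mul_sub, mul_one, Matrix.mul_smul, Matrix.mul_smul, m1, m2]
      try abel
    have hco : α/ν * (ν/(ν-1)) = α/(ν-1) := by
      field_simp
    rw [e1, hLatt, hWdef, smul_sub, smul_smul, hco, hc, ht]
    module
  rw [hW]
  -- Hermitian structure of Lrep
  have hLrepH : Lrep.IsHermitian := isHermitianOfSymm hrepSymm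
  have specL : spectrum ℝ Lrep = Set.range hLrepH.eigenvalues :=
    Matrix.IsHermitian.spectrum_real_eq_range_eigenvalues hLrepH
  have : Nonempty (Fin n) := ⟨⟨0, by omega⟩⟩
  obtain ⟨i0, hi0⟩ := Finite.exists_max hLrepH.eigenvalues
  have hlam' : lamMaxRep = hLrepH.eigenvalues i0 := by
    rw [hlam, specL]
    refine IsGreatest.csSup_eq ⟨⟨i0, rfl⟩, ?_⟩
    rintro r ⟨j, rfl⟩
    exact hi0 j
  have hquadL : ∀ v : Fin n → ℝ, v ⬝ᵥ (Lrep *ᵥ v) ≤ lamMaxRep * (v ⬝ᵥ v) :=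
    quadBound hLrepH (by rw [hlam']; exact hi0)
  -- positivity of lamMaxRep
  have hLpos : 0 < lamMaxRep := by
    obtain ⟨v, s, hs0, hv0, hsv⟩ := hLrepH.exists_eigenvector_of_ne_zero hrepNe
    have hvpos := dotSelfPos hv0
    have hsq : v ⬝ᵥ (Lrep *ᵥ v) = s * (v ⬝ᵥ v) := by
      rw [hsv, dotProduct_smul, smul_eq_mul]
    have hs_nonneg : 0 ≤ s := by
      by_contra hneg
      push_neg at hneg
      have := hrepPSD v
      nlinarith
    have hspos : 0 < s := hs_nonneg.lt_of_ne (Ne.symm hs0)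
    have hmem : s ∈ spectrum ℝ Lrep := memSpecOfEigen hv0 hsv
    rw [specL] at hmem
    obtain ⟨j, hj⟩ := hmem
    have := hi0 j
    rw [hlam']
    nlinarith
  -- eigenvector of W for c + t * lamMaxRep
  set u : Fin n → ℝ := ⇑(hLrepH.eigenvectorBasis i0) with hu_def
  have hu : Lrep *ᵥ u = lamMaxRep • u := by
    rw [hu_def, hLrepH.mulVec_eigenvectorBasis i0, hlam']
  have hu0 : u ≠ 0 := by
    intro h
    apply hLrepH.eigenvectorBasis.orthonormal.ne_zero i0
    ext i
    exact congrFun h i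
  have husum : ∑ i, u i = 0 := by
    have h1 : (fun _ : Fin n => (1:ℝ)) ⬝ᵥ (Lrep *ᵥ u) = lamMaxRep * ∑ i, u i := by
      rw [hu, dotProduct_smul, smul_eq_mul]
      simp [dotProduct]
    have h2 : (fun _ : Fin n => (1:ℝ)) ⬝ᵥ (Lrep *ᵥ u) = 0 := by
      rw [dotProduct_mulVec, ← mulVec_transpose, hrepSymm.eq, hrepKer, zero_dotProduct]
    rw [h2] at h1
    have := h1.symm
    exact (mul_eq_zero.mp this).resolve_left (ne_of_gt hLpos)
  have hJu : J *ᵥ u = 0 := by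
    rw [hJ]
    ext i
    simp only [mulVec, dotProduct, hJ, Matrix.smul_apply, hB, Matrix.of_apply, smul_eq_mul,
      mul_one, Pi.zero_apply]
    rw [← Finset.mul_sum, husum, mul_zero]
  have hWu : W *ᵥ u = (c + t * lamMaxRep) • u := by
    rw [hWdef, add_mulVec, smul_mulVec, smul_mulVec, sub_mulVec, one_mulVec,
      hJu, sub_zero, hu, add_smul, smul_smul]
  have hmemW : (c + t * lamMaxRep) ∈ spectrum ℝ W := memSpecOfEigen hu0 hWu
  -- J quadratic form bounds
  have hquadJ : ∀ v : Fin n → ℝ, 0 ≤ v ⬝ᵥ (J *ᵥ v) ∧ v ⬝ᵥ (J *ᵥ v) ≤ v ⬝ᵥ v := by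
    intro v
    have hJv : v ⬝ᵥ (J *ᵥ v) = ν⁻¹ * (∑ i, v i)^2 := by
      rw [hJ, smul_mulVec, dotProduct_smul, smul_eq_mul]
      congr 1
      rw [sq]
      simp [mulVec, dotProduct, hB, Finset.mul_sum, Finset.sum_mul, mul_comm]
    have hsq : (∑ i, v i)^2 ≤ (n:ℝ) * ∑ i, (v i)^2 := by
      have := sq_sum_le_card_mul_sum_sq (s := Finset.univ) (f := v)
      simpa using this
    have hvv : v ⬝ᵥ v = ∑ i, (v i)^2 := by
      simp [dotProduct, sq]
    constructor
    · rw [hJv]; positivity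
    · rw [hJv, hvv, inv_mul_le_iff₀ hν0]
      exact hsq
  -- W Hermitian and eigenvalue bounds
  have hWsymm : W.IsSymm := by
    have hBsymm : Bᵀ = B := by
      ext i j
      simp [hB]
    rw [Matrix.IsSymm, hWdef, transpose_add, transpose_smul, transpose_smul, transpose_sub,
      transpose_one, hrepSymm.eq, hJ, transpose_smul, hBsymm]
  have hWH : W.IsHermitian := isHermitianOfSymm hWsymm
  have specW : spectrum ℝ W = Set.range hWH.eigenvalues :=
    Matrix.IsHermitian.spectrum_real_eq_range_eigenvalues hWH
  have hcpos : 0 < c := by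
    rw [hc]
    have : α/(ν-1) ≤ 1/2 := by
      rw [div_le_div_iff₀ hν1 (by norm_num)]
      nlinarith
    linarith
  have htpos : 0 < t := by
    rw [ht]; exact div_pos (by linarith) hν0
  have hbound : ∀ i, 0 ≤ hWH.eigenvalues i ∧ hWH.eigenvalues i ≤ c + t * lamMaxRep := by
    intro i
    set x : Fin n → ℝ := ⇑(hWH.eigenvectorBasis i) with hx_def
    have hx0 : x ≠ 0 := by
      intro h
      apply hWH.eigenvectorBasis.orthonormal.ne_zero i
      ext k
      exact congrFun h k
    have hxpos := dotSelfPos hx0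
    have hxe : x ⬝ᵥ (W *ᵥ x) = hWH.eigenvalues i * (x ⬝ᵥ x) := by
      rw [hx_def, hWH.mulVec_eigenvectorBasis i, dotProduct_smul, smul_eq_mul]
    have hexp : x ⬝ᵥ (W *ᵥ x) = c * (x ⬝ᵥ x - x ⬝ᵥ (J *ᵥ x)) + t * (x ⬝ᵥ (Lrep *ᵥ x)) := by
      rw [hWdef, add_mulVec, smul_mulVec, smul_mulVec, sub_mulVec, one_mulVec,
        dotProduct_add, dotProduct_smul, dotProduct_smul, dotProduct_sub, smul_eq_mul,
        smul_eq_mul]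
    obtain ⟨hJ1, hJ2⟩ := hquadJ x
    have hL1 := hrepPSD x
    have hL2 := hquadL x
    have key1 : 0 ≤ hWH.eigenvalues i * (x ⬝ᵥ x) := by
      rw [← hxe, hexp]
      have h1 : 0 ≤ c * (x ⬝ᵥ x - x ⬝ᵥ (J *ᵥ x)) := mul_nonneg hcpos.le (by linarith)
      have h2 : 0 ≤ t * (x ⬝ᵥ (Lrep *ᵥ x)) := mul_nonneg htpos.le hL1
      linarith
    have key2 : hWH.eigenvalues i * (x ⬝ᵥ x) ≤ (c + t * lamMaxRep) * (x ⬝ᵥ x) := by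
      rw [← hxe, hexp]
      have h1 : c * (x ⬝ᵥ x - x ⬝ᵥ (J *ᵥ x)) ≤ c * (x ⬝ᵥ x) :=
        mul_le_mul_of_nonneg_left (by linarith) hcpos.le
      have h2 : t * (x ⬝ᵥ (Lrep *ᵥ x)) ≤ t * (lamMaxRep * (x ⬝ᵥ x)) :=
        mul_le_mul_of_nonneg_left hL2 htpos.le
      have h3 : (c + t * lamMaxRep) * (x ⬝ᵥ x)
          = c * (x ⬝ᵥ x) + t * (lamMaxRep * (x ⬝ᵥ x)) := by ring
      linarith
    constructor
    · by_contra hcon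
      push_neg at hcon
      have := mul_neg_of_neg_of_pos hcon hxpos
      linarith
    · exact le_of_mul_le_mul_right key2 hxpos
  -- compute specRad
  have hgt0 : 0 < c + t * lamMaxRep := by
    have := mul_pos htpos hLpos
    linarith
  have hspec : specRad W = c + t * lamMaxRep := by
    rw [specRad]
    apply IsGreatest.csSup_eq
    constructor
    · exact ⟨Complex.ofReal (c + t * lamMaxRep), (specRealIff W _).mpr hmemW,
        by rw [Complex.norm_real, Real.norm_eq_abs, abs_of_pos hgt0]⟩
    · rintro r ⟨μ, hμ, rfl⟩
      rw [specComplexEq hWsymm] at hμ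
      obtain ⟨e, he, rfl⟩ := hμ
      rw [specW] at he
      obtain ⟨i, rfl⟩ := he
      obtain ⟨h1, h2⟩ := hbound i
      rw [Complex.norm_real, Real.norm_eq_abs, abs_of_nonneg h1]
      exact h2
  rw [hspec, hc, ht]
  exact arithAux ν α β lamMaxRep βstar hν3 hα0 hα1 hβ hLpos hβstar
end

section
/- Ring-graph divergence bound: let L_{R_n} be the Laplacian of the ring graph on n ≥ 3 nodes, and let L_rep be the Laplacian of a nonempty subgraph consisting of a single bidirectional edge (so λ_max(L_rep) = 1, here weighted by P = A_{R_n}/2 so that L_rep has largest eigenvalue 1). For W̄ = I − (α/(2n))L_{R_n} + ((α+β)/n)L_rep appearing in the decomposition, the spectral radius of (I − 𝟏𝟏^T/n)W̄ satisfies ρ ≥ 1 + (β − α)/n. In particular ρ > 1 whenever β > α. -/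
open Matrix Real

lemma abs_spectrum_bddAbove {n : ℕ} (M : Matrix (Fin n) (Fin n) ℂ) :
    BddAbove {r : ℝ | ∃ μ ∈ spectrum ℂ M, r = ‖μ‖} := by
  have h : {r : ℝ | ∃ μ ∈ spectrum ℂ M, r = ‖μ‖} = (fun μ : ℂ => ‖μ‖) '' spectrum ℂ M := by
    ext r; simp [Set.mem_image, eq_comm]
  rw [h]
  exact ((Matrix.finite_spectrum M).image _).bddAbove

lemma mem_spectrum_map_ofReal {n : ℕ} {M : Matrix (Fin n) (Fin n) ℝ} {t : ℝ}
    (h : t ∈ spectrum ℝ M) : (t : ℂ) ∈ spectrum ℂ (M.map Complex.ofReal) := by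
  rw [spectrum.mem_iff] at h ⊢
  intro hu; apply h
  have hmap : algebraMap ℂ (Matrix (Fin n) (Fin n) ℂ) (t:ℂ) - M.map Complex.ofReal
      = (algebraMap ℝ (Matrix (Fin n) (Fin n) ℝ) t - M).map (Complex.ofRealHom) := by
    ext a b
    simp [Matrix.algebraMap_matrix_apply, Matrix.map_apply, Matrix.sub_apply, apply_ite]
  rw [Matrix.isUnit_iff_isUnit_det] at hu ⊢
  rw [hmap] at hu
  have hdet : (((algebraMap ℝ (Matrix (Fin n) (Fin n) ℝ)) t - M).map ⇑Complex.ofRealHom).det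
      = Complex.ofRealHom ((algebraMap ℝ (Matrix (Fin n) (Fin n) ℝ)) t - M).det :=
    (RingHom.map_det Complex.ofRealHom _).symm
  rw [hdet] at hu
  rw [isUnit_iff_ne_zero] at hu ⊢
  simpa using hu

lemma rayleigh_le_max {n : ℕ} {M : Matrix (Fin n) (Fin n) ℝ} (hM : M.IsHermitian)
    {t : ℝ} (ht : ∀ k, hM.eigenvalues k ≤ t) (v : Fin n → ℝ) :
    v ⬝ᵥ (M *ᵥ v) ≤ t * (v ⬝ᵥ v) := by
  set U : Matrix (Fin n) (Fin n) ℝ := (hM.eigenvectorUnitary : Matrix (Fin n) (Fin n) ℝ) with hUdef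
  have hU : U * star U = 1 := (Matrix.mem_unitaryGroup_iff).mp hM.eigenvectorUnitary.2
  have hstar : star U = Uᵀ := by
    ext a b; simp [Matrix.star_apply]
  set w : Fin n → ℝ := Uᵀ *ᵥ v with hwdef
  have hD : Matrix.diagonal (RCLike.ofReal ∘ hM.eigenvalues) = Matrix.diagonal hM.eigenvalues := by
    simp [RCLike.ofReal_real_eq_id]
  have key : v ⬝ᵥ (M *ᵥ v) = w ⬝ᵥ ((Matrix.diagonal hM.eigenvalues) *ᵥ w) := by
    conv_lhs => rw [hM.spectral_theorem, Unitary.conjStarAlgAut_apply]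
    rw [hstar, hD, ← hUdef]
    rw [← Matrix.mulVec_mulVec, ← Matrix.mulVec_mulVec, Matrix.dotProduct_mulVec,
      ← Matrix.mulVec_transpose]
  have hww : w ⬝ᵥ w = v ⬝ᵥ v := by
    have huw : U *ᵥ w = v := by
      rw [hwdef, Matrix.mulVec_mulVec, ← hstar, hU, Matrix.one_mulVec]
    calc w ⬝ᵥ w = (v ᵥ* U) ⬝ᵥ w := by rw [← Matrix.mulVec_transpose]
    _ = v ⬝ᵥ (U *ᵥ w) := (Matrix.dotProduct_mulVec _ _ _).symm
    _ = v ⬝ᵥ v := by rw [huw]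
  rw [key, ← hww]
  unfold dotProduct
  rw [Finset.mul_sum]
  apply Finset.sum_le_sum
  intro k _
  rw [Matrix.mulVec_diagonal]
  have h2 : w k * (hM.eigenvalues k * w k) = hM.eigenvalues k * (w k * w k) := by ring
  rw [h2]
  exact mul_le_mul_of_nonneg_right (ht k) (mul_self_nonneg _)

lemma ring_col_sum {n : ℕ} (hn : 3 ≤ n) (b : Fin n) :
    ∑ c : Fin n, (if (b:ℕ) = ((c:ℕ)+1) % n ∨ (c:ℕ) = ((b:ℕ)+1) % n then (1:ℝ) else 0) = 2 := by
  have hn0 : 0 < n := by omega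
  have hb := b.isLt
  have hmod1 : ((b:ℕ) + (n-1)) % n = if (b:ℕ) = 0 then n-1 else (b:ℕ)-1 := by
    split_ifs with h
    · rw [h]; simpa using Nat.mod_eq_of_lt (show n-1 < n by omega)
    · rw [Nat.mod_eq_sub_mod (by omega)]
      have h2 : (b:ℕ)+(n-1)-n = (b:ℕ)-1 := by omega
      rw [h2]; exact Nat.mod_eq_of_lt (by omega)
  have hmod2 : ((b:ℕ)+1) % n = if (b:ℕ)+1 = n then 0 else (b:ℕ)+1 := by
    split_ifs with h
    · rw [h, Nat.mod_self]
    · exact Nat.mod_eq_of_lt (by omega)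
  set p : Fin n := ⟨((b:ℕ) + (n-1)) % n, Nat.mod_lt _ hn0⟩ with hp
  set s : Fin n := ⟨((b:ℕ)+1) % n, Nat.mod_lt _ hn0⟩ with hs
  have hpv : (p:ℕ) = ((b:ℕ) + (n-1)) % n := rfl
  have hsv : (s:ℕ) = ((b:ℕ)+1) % n := rfl
  have key : ∀ c : Fin n, ((b:ℕ) = ((c:ℕ)+1) % n ∨ (c:ℕ) = ((b:ℕ)+1) % n) ↔ (c = p ∨ c = s) := by
    intro c
    have hc := c.isLt
    have h1 : ((c:ℕ)+1) % n = if (c:ℕ)+1 = n then 0 else (c:ℕ)+1 := by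
      split_ifs with h
      · rw [h, Nat.mod_self]
      · exact Nat.mod_eq_of_lt (by omega)
    rw [Fin.ext_iff, Fin.ext_iff, hpv, hsv, hmod1, hmod2, h1]
    split_ifs <;> omega
  have hps : p ≠ s := by
    rw [Ne, Fin.ext_iff, hpv, hsv, hmod1, hmod2]
    split_ifs <;> omega
  calc ∑ c : Fin n, (if (b:ℕ) = ((c:ℕ)+1) % n ∨ (c:ℕ) = ((b:ℕ)+1) % n then (1:ℝ) else 0)
      = ∑ c : Fin n, ((if c = p then (1:ℝ) else 0) + (if c = s then 1 else 0)) := by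
        apply Finset.sum_congr rfl
        intro c _
        rw [if_congr (key c) rfl rfl]
        by_cases h1 : c = p <;> by_cases h2 : c = s
        · exact absurd (h1.symm.trans h2) hps
        all_goals simp [h1, h2, hps, Ne.symm hps]
    _ = 2 := by
        rw [Finset.sum_add_distrib, Finset.sum_ite_eq' Finset.univ p (fun _ => (1:ℝ)),
          Finset.sum_ite_eq' Finset.univ s (fun _ => (1:ℝ))]
        simp; norm_num

lemma isHermitian_of_symm {n : ℕ} {X : Matrix (Fin n) (Fin n) ℝ}
    (h : ∀ a b, X a b = X b a) : X.IsHermitian := by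
  ext a b
  rw [Matrix.conjTranspose_apply, star_trivial]
  exact h b a

/-- Ring-graph divergence bound: let `L_{R_n}` be the Laplacian of the ring graph on
`n ≥ 3` nodes and let `L_rep = (1/2)(e_i − e_j)(e_i − e_j)ᵀ` be the Laplacian of a single
bidirectional repulsive edge weighted by `P = A_{R_n}/2` (so `λ_max(L_rep) = 1`). For
`W̄ = I − (α/(2n))L_{R_n} + ((α+β)/n)L_rep`, the spectral radius of `(I − 𝟏𝟏ᵀ/n)W̄`
is at least `1 + (β − α)/n`; in particular it exceeds `1` whenever `β > α`. -/
theorem stmt9 {n : ℕ} (hn : 3 ≤ n)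
    (α β : ℝ) (hα : 0 ≤ α ∧ α ≤ 1) (hβ : 0 ≤ β)
    (i j : Fin n) (hij : i ≠ j)
    (A LRn Lrep J W : Matrix (Fin n) (Fin n) ℝ)
    (hA : ∀ a b : Fin n, A a b =
      (if (b : ℕ) = ((a : ℕ) + 1) % n ∨ (a : ℕ) = ((b : ℕ) + 1) % n then (1:ℝ) else 0))
    (hLRn : LRn = (2 : ℝ) • (1 : Matrix (Fin n) (Fin n) ℝ) - A)
    (hLrep : Lrep = (2 : ℝ)⁻¹ •
      Matrix.vecMulVec (fun a => if a = i then (1:ℝ) else if a = j then -1 else 0)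
        (fun a => if a = i then (1:ℝ) else if a = j then -1 else 0))
    (hJ : J = (n : ℝ)⁻¹ • Matrix.of (fun _ _ : Fin n => (1 : ℝ)))
    (hW : W = 1 - (α / (2 * n)) • LRn + ((α + β) / n) • Lrep) :
    1 + (β - α) / n ≤ specRad ((1 - J) * W) ∧
    (α < β → 1 < specRad ((1 - J) * W)) := by
  have hnR : (3:ℝ) ≤ (n:ℝ) := by exact_mod_cast hn
  have hn0 : (0:ℝ) < n := by linarith
  set u : Fin n → ℝ := fun a => if a = i then (1:ℝ) else if a = j then -1 else 0 with hu
  have husingle : u = (Pi.single i 1 : Fin n → ℝ) - Pi.single j 1 := by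
    funext a
    simp only [hu, Pi.sub_apply, Pi.single_apply]
    split_ifs with h1 h2 <;> simp_all
  have hui : u i = 1 := by simp [hu]
  have huj : u j = -1 := by simp [hu, Ne.symm hij]
  have hudot : ∀ x : Fin n → ℝ, u ⬝ᵥ x = x i - x j := by
    intro x
    rw [husingle, sub_dotProduct, single_dotProduct, single_dotProduct]
    ring
  have hdotu : ∀ x : Fin n → ℝ, x ⬝ᵥ u = x i - x j := by
    intro x
    rw [husingle, dotProduct_sub, dotProduct_single, dotProduct_single]
    ring
  have husum : ∑ a : Fin n, u a = 0 := by
    rw [husingle]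
    simp [Pi.sub_apply, Finset.sum_sub_distrib]
  have hAs : ∀ a b, A a b = A b a := fun a b => by
    rw [hA, hA]; exact if_congr or_comm rfl rfl
  have hAij0 : 0 ≤ A i j := by rw [hA]; split_ifs <;> norm_num
  have hAij1 : A i j ≤ 1 := by rw [hA]; split_ifs <;> norm_num
  have hAdiag : ∀ a, A a a = 0 := by
    intro a
    have ha := a.isLt
    have hne : ((a:ℕ)+1) % n ≠ (a:ℕ) := by
      rcases eq_or_ne ((a:ℕ)+1) n with h|h
      · rw [h, Nat.mod_self]; omega
      · rw [Nat.mod_eq_of_lt (by omega)]; omega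
    rw [hA]
    apply if_neg
    rintro (h|h) <;> exact hne h.symm
  have hcolA : ∀ b, ∑ c, A c b = 2 := by
    intro b
    rw [Finset.sum_congr rfl (fun c _ => hA c b)]
    exact ring_col_sum hn b
  have hcol1 : ∀ b, ∑ c, (1 : Matrix (Fin n) (Fin n) ℝ) c b = 1 := by
    intro b; simp [Matrix.one_apply]
  have hcolLRn : ∀ b, ∑ c, LRn c b = 0 := by
    intro b
    simp only [hLRn, Matrix.sub_apply, Matrix.smul_apply, smul_eq_mul]
    rw [Finset.sum_sub_distrib, ← Finset.mul_sum, hcol1 b, hcolA b]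
    ring
  have hcolLrep : ∀ b, ∑ c, Lrep c b = 0 := by
    intro b
    simp only [hLrep, Matrix.smul_apply, Matrix.vecMulVec_apply, smul_eq_mul]
    have h : ∀ c : Fin n, (2:ℝ)⁻¹ * (u c * u b) = ((2:ℝ)⁻¹ * u b) * u c := fun c => by ring
    rw [Finset.sum_congr rfl (fun c _ => h c), ← Finset.mul_sum, husum, mul_zero]
  have hcolW : ∀ b, ∑ c, W c b = 1 := by
    intro b
    simp only [hW, Matrix.add_apply, Matrix.sub_apply, Matrix.smul_apply, smul_eq_mul]
    rw [Finset.sum_add_distrib, Finset.sum_sub_distrib, ← Finset.mul_sum, ← Finset.mul_sum,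
      hcol1 b, hcolLRn b, hcolLrep b]
    ring
  have hJW : J * W = J := by
    ext a b
    rw [Matrix.mul_apply]
    have h : ∀ c, J a c * W c b = (n:ℝ)⁻¹ * W c b := by
      intro c; rw [hJ]; simp
    rw [Finset.sum_congr rfl (fun c _ => h c), ← Finset.mul_sum, hcolW b, mul_one, hJ]
    simp
  have hMeq : (1 - J) * W = W - J := by
    rw [Matrix.sub_mul, Matrix.one_mul, hJW]
  have hones : ∀ a b, (1 : Matrix (Fin n) (Fin n) ℝ) a b = (1 : Matrix (Fin n) (Fin n) ℝ) b a :=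
    fun a b => by simp [Matrix.one_apply]; exact if_congr eq_comm rfl rfl
  have hermM : ((1 - J) * W).IsHermitian := by
    rw [hMeq]
    apply isHermitian_of_symm
    intro a b
    simp only [hW, hJ, hLRn, hLrep, Matrix.sub_apply, Matrix.add_apply, Matrix.smul_apply,
      Matrix.vecMulVec_apply, Matrix.of_apply, smul_eq_mul]
    rw [hones a b, hAs a b]
    ring
  haveI : Nonempty (Fin n) := ⟨i⟩
  obtain ⟨k, hk⟩ := Finite.exists_max (fun l => hermM.eigenvalues l)
  set t := hermM.eigenvalues k with htdef
  have hqle : u ⬝ᵥ (((1 - J) * W) *ᵥ u) ≤ t * (u ⬝ᵥ u) := rayleigh_le_max hermM hk u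
  have huu : u ⬝ᵥ u = 2 := by rw [hdotu u, hui, huj]; norm_num
  have hJu : J *ᵥ u = 0 := by
    funext a
    simp only [Matrix.mulVec, dotProduct, hJ, Matrix.smul_apply, Matrix.of_apply,
      smul_eq_mul, mul_one, Pi.zero_apply]
    rw [← Finset.mul_sum, husum, mul_zero]
  have hAvec : ∀ a, (A *ᵥ u) a = A a i - A a j := fun a => hdotu (A a)
  have hAu : u ⬝ᵥ (A *ᵥ u) = -(2 * A i j) := by
    rw [hudot (A *ᵥ u), hAvec i, hAvec j, hAdiag i, hAdiag j, hAs j i]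
    ring
  have hLRnu : u ⬝ᵥ (LRn *ᵥ u) = 4 + 2 * A i j := by
    rw [hLRn, Matrix.sub_mulVec, Matrix.smul_mulVec, Matrix.one_mulVec,
      dotProduct_sub, dotProduct_smul, smul_eq_mul, huu, hAu]
    ring
  have hLrepu : u ⬝ᵥ (Lrep *ᵥ u) = 2 := by
    rw [hLrep, Matrix.smul_mulVec, dotProduct_smul, smul_eq_mul]
    have hv : (Matrix.vecMulVec u u) *ᵥ u = (u ⬝ᵥ u) • u := by
      funext a
      simp only [Matrix.mulVec, Matrix.vecMulVec_apply, dotProduct, Pi.smul_apply,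
        smul_eq_mul, mul_assoc]
      rw [← Finset.mul_sum]
      ring
    rw [hv, dotProduct_smul, smul_eq_mul, huu]
    norm_num
  have hq : u ⬝ᵥ (((1 - J) * W) *ᵥ u)
      = 2 - (α/(2*n)) * (4 + 2 * A i j) + ((α+β)/n) * 2 := by
    rw [hMeq, Matrix.sub_mulVec, hJu, sub_zero, hW, Matrix.add_mulVec, Matrix.sub_mulVec,
      Matrix.smul_mulVec, Matrix.smul_mulVec, Matrix.one_mulVec,
      dotProduct_add, dotProduct_sub, dotProduct_smul,
      dotProduct_smul, smul_eq_mul, smul_eq_mul, huu, hLRnu, hLrepu]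
  have hlow : 1 + (β - α)/n ≤ t := by
    rw [hq, huu] at hqle
    have hkey : (2 - (α/(2*n)) * (4 + 2 * A i j) + ((α+β)/n) * 2) / 2 - (1 + (β-α)/n)
        = α * (2 - A i j) / (2*n) := by
      field_simp
      ring
    have hnn : 0 ≤ α * (2 - A i j) / (2*n) := by
      apply div_nonneg
      · apply mul_nonneg hα.1; linarith
      · linarith
    linarith
  have htpos : 0 < t := by
    have h1n : 1/(n:ℝ) < 1 := by rw [div_lt_one hn0]; linarith
    have hba : -1 ≤ β - α := by linarith [hα.2, hβ]
    have h3 : (-1)/(n:ℝ) ≤ (β-α)/n := (div_le_div_iff_of_pos_right hn0).mpr hba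
    rw [neg_div] at h3
    linarith
  have hts : t ∈ spectrum ℝ ((1 - J) * W) := hermM.eigenvalues_mem_spectrum_real k
  have htc := mem_spectrum_map_ofReal hts
  have hmem : t ∈ {r : ℝ | ∃ μ ∈ spectrum ℂ (((1 - J) * W).map Complex.ofReal),
      r = ‖μ‖} := ⟨(t:ℂ), htc, by rw [Complex.norm_real, Real.norm_eq_abs, abs_of_pos htpos]⟩
  have hle : t ≤ specRad ((1 - J) * W) := le_csSup (abs_spectrum_bddAbove _) hmem
  constructor
  · linarith
  · intro hab
    have hd : 0 < (β - α)/n := div_pos (by linarith) hn0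
    linarith
end

section
/- Let K > 0 and let M_K be a family of commuting n×n real matrices with entries bounded by K in absolute value. Then for any ε > 0 there exists a matrix norm ‖·‖⋆ (submultiplicative norm on ℝ^{n×n}) such that ρ(A) ≤ ‖A‖⋆ ≤ ρ(A) + ε for all A ∈ M_K, where ρ denotes the spectral radius. -/
open Matrix

open Module

attribute [local instance] Matrix.linftyOpNormedRing Matrix.linftyOpNormedSpace
  Matrix.linftyOpIsBoundedSMul

set_option maxHeartbeats 1000000

/-- A finite commuting family of endomorphisms over ℂ has a common eigenvector. -/
lemma common_eigenvector_fin :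
    ∀ (m : ℕ) (V : Type) [AddCommGroup V] [Module ℂ V] [FiniteDimensional ℂ V] [Nontrivial V]
      (f : Fin m → Module.End ℂ V), (∀ i j, Commute (f i) (f j)) →
      ∃ v : V, v ≠ 0 ∧ ∀ i, ∃ c : ℂ, f i v = c • v := by
  intro m
  induction m with
  | zero =>
    intro V _ _ _ _ f _
    obtain ⟨v, hv⟩ := exists_ne (0 : V)
    exact ⟨v, hv, fun i => i.elim0⟩
  | succ m ih =>
    intro V _ _ _ _ f hcomm
    obtain ⟨c, hc⟩ := Module.End.exists_eigenvalue (f 0)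
    set E := (f 0).eigenspace c with hE
    have hEbot : E ≠ ⊥ := hc
    have : Nontrivial E := Submodule.nontrivial_iff_ne_bot.mpr hEbot
    have hmaps : ∀ i : Fin m, ∀ x ∈ E, f i.succ x ∈ E := by
      intro i x hx
      have := Module.End.mapsTo_genEigenspace_of_comm (hcomm 0 i.succ) c 1
      exact this hx
    set g : Fin m → Module.End ℂ E := fun i => (f i.succ).restrict (hmaps i) with hg
    have hgcomm : ∀ i j, Commute (g i) (g j) := by
      intro i j
      apply LinearMap.ext
      intro x
      apply Subtype.ext
      have h1 : ((g i * g j) x : V) = (f i.succ * f j.succ) (x : V) := by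
        simp [hg, Module.End.mul_apply, LinearMap.restrict_apply]
      have h2 : ((g j * g i) x : V) = (f j.succ * f i.succ) (x : V) := by
        simp [hg, Module.End.mul_apply, LinearMap.restrict_apply]
      show ((g i * g j) x : V) = ((g j * g i) x : V)
      rw [h1, h2, hcomm i.succ j.succ]
    obtain ⟨w, hw0, hw⟩ := ih E g hgcomm
    refine ⟨(w : V), by simpa using hw0, ?_⟩
    intro i
    refine Fin.cases ?_ ?_ i
    · refine ⟨c, ?_⟩
      have hwE : (w : V) ∈ E := w.2
      exact Module.End.mem_eigenspace_iff.mp hwE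
    · intro j
      obtain ⟨cj, hcj⟩ := hw j
      refine ⟨cj, ?_⟩
      have : ((g j) w : V) = f j.succ (w : V) := by simp [hg, LinearMap.restrict_apply]
      rw [← this, hcj]
      rfl

lemma common_eigenvector {V : Type} [AddCommGroup V] [Module ℂ V] [FiniteDimensional ℂ V]
    [Nontrivial V] (S : Set (Module.End ℂ V)) (hS : ∀ f ∈ S, ∀ g ∈ S, Commute f g) :
    ∃ v : V, v ≠ 0 ∧ ∀ f ∈ S, ∃ c : ℂ, f v = c • v := by
  set W := Submodule.span ℂ S with hW
  have hWcomm : ∀ x ∈ W, ∀ y ∈ W, Commute x y := by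
    intro x hx
    induction hx using Submodule.span_induction with
    | mem z hz =>
      intro y hy
      induction hy using Submodule.span_induction with
      | mem w hw => exact hS z hz w hw
      | zero => exact Commute.zero_right _
      | add a b _ _ ha hb => exact Commute.add_right ha hb
      | smul c a _ ha => exact Commute.smul_right ha c
    | zero => intro y _; exact Commute.zero_left _
    | add a b _ _ ha hb => intro y hy; exact Commute.add_left (ha y hy) (hb y hy)
    | smul c a _ ha => intro y hy; exact Commute.smul_left (ha y hy) c
  set b := Module.finBasis ℂ W with hb
  set f : Fin (Module.finrank ℂ W) → Module.End ℂ V := fun i => ((b i : W) : Module.End ℂ V)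
    with hf
  have hcomm : ∀ i j, Commute (f i) (f j) := fun i j => hWcomm _ (b i).2 _ (b j).2
  obtain ⟨v, hv0, hv⟩ := common_eigenvector_fin _ V f hcomm
  refine ⟨v, hv0, ?_⟩
  have hspan : Submodule.span ℂ (Set.range f) = W := by
    have h1 : Submodule.map W.subtype (Submodule.span ℂ (Set.range b))
        = Submodule.span ℂ (Set.range f) := by
      rw [Submodule.map_span]
      congr 1
      rw [← Set.range_comp]
      rfl
    rw [b.span_eq] at h1
    rw [← h1, Submodule.map_subtype_top]
  set U : Submodule ℂ (Module.End ℂ V) :=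
    Submodule.comap (LinearMap.applyₗ v) (Submodule.span ℂ {v}) with hU
  have hfU : ∀ i, f i ∈ U := by
    intro i
    obtain ⟨c, hc⟩ := hv i
    simp only [hU, Submodule.mem_comap, LinearMap.applyₗ_apply_apply]
    rw [hc]
    exact Submodule.smul_mem _ _ (Submodule.mem_span_singleton_self v)
  have hWU : W ≤ U := by
    rw [← hspan, Submodule.span_le]
    rintro _ ⟨i, rfl⟩
    exact hfU i
  intro g hg
  have : g v ∈ Submodule.span ℂ {v} := hWU (Submodule.subset_span hg)
  obtain ⟨c, hc⟩ := Submodule.mem_span_singleton.mp this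
  exact ⟨c, hc.symm⟩

lemma flag_step {V : Type} [AddCommGroup V] [Module ℂ V] [FiniteDimensional ℂ V]
    (S : Set (Module.End ℂ V)) (hS : ∀ f ∈ S, ∀ g ∈ S, Commute f g)
    (p : Submodule ℂ V) (hp : ∀ f ∈ S, Submodule.map f p ≤ p)
    (hrk : Module.finrank ℂ p < Module.finrank ℂ V) :
    ∃ q : Submodule ℂ V, p ≤ q ∧ Module.finrank ℂ q = Module.finrank ℂ p + 1 ∧
      ∀ f ∈ S, Submodule.map f q ≤ q := by
  have hptop : p ≠ ⊤ := by
    intro h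
    rw [h, finrank_top] at hrk
    exact lt_irrefl _ hrk
  have : Nontrivial (V ⧸ p) := (Submodule.Quotient.nontrivial_iff (p := p)).mpr hptop
  have hcomap : ∀ f ∈ S, p ≤ p.comap f := fun f hf => Submodule.map_le_iff_le_comap.mp (hp f hf)
  set Sbar : Set (Module.End ℂ (V ⧸ p)) :=
    {g | ∃ f : Module.End ℂ V, ∃ hf : f ∈ S, g = p.mapQ p f (hcomap f hf)} with hSbar
  have hSbarcomm : ∀ g₁ ∈ Sbar, ∀ g₂ ∈ Sbar, Commute g₁ g₂ := by
    rintro _ ⟨f₁, hf₁, rfl⟩ _ ⟨f₂, hf₂, rfl⟩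
    apply Submodule.linearMap_qext
    apply LinearMap.ext
    intro x
    have h2 : f₁ (f₂ x) = f₂ (f₁ x) := by
      have := congrArg (fun g => g x) (hS f₁ hf₁ f₂ hf₂)
      simpa [Module.End.mul_apply] using this
    simp only [LinearMap.comp_apply, Module.End.mul_apply, Submodule.mkQ_apply,
      Submodule.mapQ_apply, h2]
  obtain ⟨vbar, hv0, hv⟩ := common_eigenvector Sbar hSbarcomm
  obtain ⟨v, rfl⟩ := Submodule.mkQ_surjective p vbar
  have hvnp : v ∉ p := by
    intro h
    apply hv0
    simpa [Submodule.Quotient.mk_eq_zero] using h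
  have hvne : v ≠ 0 := fun h => hvnp (h ▸ p.zero_mem)
  refine ⟨p ⊔ Submodule.span ℂ {v}, le_sup_left, ?_, ?_⟩
  · have hinf : p ⊓ Submodule.span ℂ {v} = ⊥ := by
      rw [eq_bot_iff]
      rintro x ⟨hxp, hxs⟩
      obtain ⟨a, rfl⟩ := Submodule.mem_span_singleton.mp hxs
      rcases eq_or_ne a 0 with rfl | ha
      · simp
      · exfalso
        have hv2 : a⁻¹ • a • v ∈ p := p.smul_mem a⁻¹ hxp
        rw [smul_smul, inv_mul_cancel₀ ha, one_smul] at hv2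
        exact hvnp hv2
    have := Submodule.finrank_sup_add_finrank_inf_eq p (Submodule.span ℂ {v})
    rw [hinf, finrank_span_singleton hvne] at this
    simpa using this
  · intro f hf
    have hfv : f v ∈ p ⊔ Submodule.span ℂ {v} := by
      obtain ⟨c, hc⟩ := hv (p.mapQ p f (hcomap f hf)) ⟨f, hf, rfl⟩
      have hc' : p.mkQ (f v) = c • p.mkQ v := by
        simpa [Submodule.mapQ_apply] using hc
      have hzero : p.mkQ (f v - c • v) = 0 := by
        rw [map_sub, hc', (p.mkQ).map_smul, sub_self]
      have hmem : f v - c • v ∈ p := by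
        rwa [Submodule.mkQ_apply, Submodule.Quotient.mk_eq_zero] at hzero
      have heq : f v = (f v - c • v) + c • v := by abel
      rw [heq]
      exact Submodule.add_mem _ (le_sup_left (a := p) (b := Submodule.span ℂ {v}) hmem)
        (Submodule.mem_sup_right (Submodule.smul_mem _ _ (Submodule.mem_span_singleton_self v)))
    rw [Submodule.map_sup]
    apply sup_le
    · exact le_trans (hp f hf) le_sup_left
    · rw [Submodule.map_span, Set.image_singleton, Submodule.span_le, Set.singleton_subset_iff]
      exact hfv

lemma exists_flag {V : Type} [AddCommGroup V] [Module ℂ V] [FiniteDimensional ℂ V]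
    (S : Set (Module.End ℂ V)) (hS : ∀ f ∈ S, ∀ g ∈ S, Commute f g) :
    ∃ F : ℕ → Submodule ℂ V,
      (∀ k, F k ≤ F (k + 1)) ∧
      (∀ k, Module.finrank ℂ (F k) = min k (Module.finrank ℂ V)) ∧
      (∀ k, ∀ f ∈ S, Submodule.map f (F k) ≤ F k) := by
  classical
  set n := Module.finrank ℂ V with hn
  let step : Submodule ℂ V → Submodule ℂ V := fun p =>
    if h : (∀ f ∈ S, Submodule.map f p ≤ p) ∧ Module.finrank ℂ p < n then
      (flag_step S hS p h.1 h.2).choose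
    else p
  have hstep : ∀ p, (∀ f ∈ S, Submodule.map f p ≤ p) →
      p ≤ step p ∧ (∀ f ∈ S, Submodule.map f (step p) ≤ step p) ∧
      (Module.finrank ℂ p < n → Module.finrank ℂ (step p) = Module.finrank ℂ p + 1) ∧
      (¬ Module.finrank ℂ p < n → step p = p) := by
    intro p hp
    by_cases h : Module.finrank ℂ p < n
    · have hd : (∀ f ∈ S, Submodule.map f p ≤ p) ∧ Module.finrank ℂ p < n := ⟨hp, h⟩
      have hsp : step p = (flag_step S hS p hd.1 hd.2).choose := dif_pos hd
      obtain ⟨h1, h2, h3⟩ := (flag_step S hS p hd.1 hd.2).choose_spec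
      rw [hsp]
      exact ⟨h1, h3, fun _ => h2, fun hc => absurd h hc⟩
    · have hsp : step p = p := dif_neg (fun hd => h hd.2)
      rw [hsp]
      exact ⟨le_refl _, hp, fun hc => absurd hc h, fun _ => rfl⟩
  set F : ℕ → Submodule ℂ V := fun k => step^[k] ⊥ with hF
  have key : ∀ k, (∀ f ∈ S, Submodule.map f (F k) ≤ F k) ∧
      Module.finrank ℂ (F k) = min k n := by
    intro k
    induction k with
    | zero =>
      constructor
      · intro f _; simp [hF]
      · simp [hF, finrank_bot]
    | succ k ih =>
      obtain ⟨ih1, ih2⟩ := ih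
      have hFs : F (k + 1) = step (F k) := Function.iterate_succ_apply' step k ⊥
      obtain ⟨hle, hinv, hlt, hnlt⟩ := hstep (F k) ih1
      constructor
      · rw [hFs]; exact hinv
      · rw [hFs]
        by_cases h : Module.finrank ℂ (F k) < n
        · rw [hlt h, ih2]
          have hkn : k < n := by
            rcases lt_or_ge k n with h' | h'
            · exact h'
            · rw [min_eq_right h'] at ih2
              rw [ih2] at h
              exact absurd h (lt_irrefl n)
          rw [min_eq_left (le_of_lt hkn), min_eq_left hkn]
        · rw [hnlt h, ih2]
          have hkn : n ≤ k := by
            rcases lt_or_ge k n with h' | h'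
            · rw [min_eq_left (le_of_lt h')] at ih2
              rw [ih2] at h
              exact absurd h' h
            · exact h'
          rw [min_eq_right hkn, min_eq_right (le_trans hkn (Nat.le_succ k))]
  refine ⟨F, ?_, fun k => (key k).2, fun k => (key k).1⟩
  intro k
  have hFs : F (k + 1) = step (F k) := Function.iterate_succ_apply' step k ⊥
  rw [hFs]
  exact (hstep (F k) (key k).1).1

lemma exists_triangularizing_basis (n : ℕ) (S : Set (Module.End ℂ (Fin n → ℂ)))
    (hS : ∀ f ∈ S, ∀ g ∈ S, Commute f g) :
    ∃ b : Basis (Fin n) ℂ (Fin n → ℂ),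
      ∀ f ∈ S, ∀ i j : Fin n, (j : ℕ) < (i : ℕ) → LinearMap.toMatrix b b f i j = 0 := by
  have hrkV : Module.finrank ℂ (Fin n → ℂ) = n := by simp
  obtain ⟨F, hmono, hrk, hinv⟩ := exists_flag S hS
  simp only [hrkV] at hrk
  -- pick vectors in the flag differences
  have hpick : ∀ k : Fin n, ∃ x, x ∈ F ((k : ℕ) + 1) ∧ x ∉ F (k : ℕ) := by
    intro k
    have h1 : Module.finrank ℂ (F (k : ℕ)) = (k : ℕ) := by
      rw [hrk]; exact min_eq_left (le_of_lt k.2)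
    have h2 : Module.finrank ℂ (F ((k : ℕ) + 1)) = (k : ℕ) + 1 := by
      rw [hrk]; exact min_eq_left k.2
    have hlt : F (k : ℕ) < F ((k : ℕ) + 1) := by
      refine lt_of_le_of_ne (hmono _) ?_
      intro h
      rw [h, h2] at h1
      omega
    obtain ⟨x, hx1, hx2⟩ := SetLike.exists_of_lt hlt
    exact ⟨x, hx1, hx2⟩
  choose v hv1 hv2 using hpick
  -- spans
  have span_claim : ∀ k : ℕ, k ≤ n →
      Submodule.span ℂ (v '' {i : Fin n | (i : ℕ) < k}) = F k := by
    intro k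
    induction k with
    | zero =>
      intro _
      have : {i : Fin n | (i : ℕ) < 0} = ∅ := by ext i; simp
      rw [this, Set.image_empty, Submodule.span_empty]
      symm
      rw [← Submodule.finrank_eq_zero (R := ℂ) (M := Fin n → ℂ)]
      rw [hrk]; omega
    | succ k ih =>
      intro hk1
      have hkn : k < n := hk1
      have ihe := ih (le_of_lt hkn)
      have hset : {i : Fin n | (i : ℕ) < k + 1}
          = insert (⟨k, hkn⟩ : Fin n) {i : Fin n | (i : ℕ) < k} := by
        ext i
        simp only [Set.mem_setOf_eq, Set.mem_insert_iff, Nat.lt_succ_iff_lt_or_eq, Fin.ext_iff]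
        tauto
      rw [hset, Set.image_insert_eq, Submodule.span_insert, ihe]
      have hle : Submodule.span ℂ ({v ⟨k, hkn⟩} : Set (Fin n → ℂ)) ⊔ F k ≤ F (k + 1) := by
        apply sup_le
        · rw [Submodule.span_le, Set.singleton_subset_iff]
          exact hv1 ⟨k, hkn⟩
        · exact hmono k
      have hfrk : Module.finrank ℂ ↥(Submodule.span ℂ ({v ⟨k, hkn⟩} : Set (Fin n → ℂ)) ⊔ F k) = k + 1 := by
        have hinf : Submodule.span ℂ ({v ⟨k, hkn⟩} : Set (Fin n → ℂ)) ⊓ F k = ⊥ := by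
          rw [eq_bot_iff]
          rintro x ⟨hxs, hxp⟩
          obtain ⟨a, rfl⟩ := Submodule.mem_span_singleton.mp hxs
          rcases eq_or_ne a 0 with rfl | ha
          · simp
          · exfalso
            have hv2' : a⁻¹ • a • v ⟨k, hkn⟩ ∈ F k := (F k).smul_mem a⁻¹ hxp
            rw [smul_smul, inv_mul_cancel₀ ha, one_smul] at hv2'
            exact hv2 ⟨k, hkn⟩ hv2'
        have hvne : v ⟨k, hkn⟩ ≠ 0 := by
          intro h
          exact hv2 ⟨k, hkn⟩ (h ▸ (F k).zero_mem)
        have := Submodule.finrank_sup_add_finrank_inf_eq (Submodule.span ℂ ({v ⟨k, hkn⟩} : Set (Fin n → ℂ))) (F k)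
        rw [hinf, finrank_span_singleton hvne] at this
        have hFk : Module.finrank ℂ (F k) = k := by rw [hrk]; omega
        rw [hFk] at this
        simpa [add_comm] using this
      have hF1 : Module.finrank ℂ (F (k + 1)) = k + 1 := by rw [hrk]; omega
      apply Submodule.eq_of_le_of_finrank_le hle
      rw [hfrk, hF1]
  -- top
  have hspan_top : Submodule.span ℂ (Set.range v) = ⊤ := by
    have h1 : {i : Fin n | (i : ℕ) < n} = Set.univ := by ext i; simp [i.2]
    have h2 := span_claim n (le_refl n)
    rw [h1, Set.image_univ] at h2
    rw [h2]
    apply Submodule.eq_top_of_finrank_eq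
    rw [hrk, hrkV]; omega
  have hli : LinearIndependent ℂ v :=
    linearIndependent_of_top_le_span_of_card_eq_finrank (le_of_eq hspan_top.symm) (by simp)
  set b : Basis (Fin n) ℂ (Fin n → ℂ) := Basis.mk hli (le_of_eq hspan_top.symm) with hb
  have hbv : ⇑b = v := by rw [hb]; exact Basis.coe_mk _ _
  refine ⟨b, ?_⟩
  intro f hf i j hij
  have hfb : f (b j) ∈ Submodule.span ℂ (⇑b '' {l : Fin n | (l : ℕ) < (j : ℕ) + 1}) := by
    rw [hbv]
    rw [span_claim ((j : ℕ) + 1) j.2]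
    apply hinv ((j : ℕ) + 1) f hf
    refine Submodule.mem_map_of_mem ?_
    rw [← span_claim ((j : ℕ) + 1) j.2]
    apply Submodule.subset_span
    exact ⟨j, by simp, rfl⟩
  have hsupp := b.repr_support_subset_of_mem_span _ hfb
  rw [LinearMap.toMatrix_apply]
  by_contra h
  have : i ∈ (b.repr (f (b j))).support := Finsupp.mem_support_iff.mpr h
  have := hsupp this
  simp only [Set.mem_setOf_eq] at this
  omega

lemma entry_norm_le {n : ℕ} (M : Matrix (Fin n) (Fin n) ℂ) (i j : Fin n) :
    ‖M i j‖ ≤ ‖M‖ := by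
  rw [Matrix.linfty_opNorm_def]
  have h1 : ‖M i j‖₊ ≤ ∑ k, ‖M i k‖₊ :=
    Finset.single_le_sum (f := fun k => ‖M i k‖₊) (fun _ _ => zero_le) (Finset.mem_univ j)
  have h2 : (∑ k, ‖M i k‖₊) ≤ Finset.univ.sup fun i => ∑ k, ‖M i k‖₊ :=
    Finset.le_sup (f := fun i => ∑ k, ‖M i k‖₊) (Finset.mem_univ i)
  exact_mod_cast h1.trans h2

lemma norm_le_of_rows {n : ℕ} (M : Matrix (Fin n) (Fin n) ℂ) (r : ℝ) (hr : 0 ≤ r)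
    (h : ∀ i, ∑ j, ‖M i j‖ ≤ r) : ‖M‖ ≤ r := by
  rw [Matrix.linfty_opNorm_def]
  have key : (Finset.univ.sup fun i => ∑ j, ‖M i j‖₊) ≤ r.toNNReal := by
    apply Finset.sup_le
    intro i _
    rw [← NNReal.coe_le_coe, Real.coe_toNNReal r hr]
    push_cast
    exact h i
  calc ((Finset.univ.sup fun i => ∑ j, ‖M i j‖₊ : NNReal) : ℝ)
      ≤ (r.toNNReal : ℝ) := NNReal.coe_le_coe.mpr key
    _ = r := Real.coe_toNNReal r hr

lemma specRad_triangular {n : ℕ} (hn : 0 < n) (A : Matrix (Fin n) (Fin n) ℝ)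
    (T : Matrix (Fin n) (Fin n) ℂ)
    (hspec : spectrum ℂ (A.map Complex.ofReal) = spectrum ℂ T)
    (htri : ∀ i j : Fin n, (j : ℕ) < (i : ℕ) → T i j = 0) :
    (∀ i, ‖T i i‖ ≤ specRad A) ∧ (∃ i, specRad A = ‖T i i‖) := by
  have hTtri : T.BlockTriangular id := htri
  have hspecT : spectrum ℂ T = {μ : ℂ | ∃ i, μ = T i i} := by
    ext μ
    rw [spectrum.mem_iff]
    have hM : (algebraMap ℂ (Matrix (Fin n) (Fin n) ℂ) μ - T).BlockTriangular id := by
      apply Matrix.BlockTriangular.sub _ hTtri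
      rw [Matrix.algebraMap_eq_diagonal]
      exact Matrix.blockTriangular_diagonal _
    rw [Matrix.isUnit_iff_isUnit_det, Matrix.det_of_upperTriangular hM, isUnit_iff_ne_zero,
      not_ne_iff, Finset.prod_eq_zero_iff]
    constructor
    · rintro ⟨i, _, hi⟩
      refine ⟨i, ?_⟩
      have : (algebraMap ℂ (Matrix (Fin n) (Fin n) ℂ) μ) i i = μ := by
        rw [Matrix.algebraMap_eq_diagonal]; simp
      rw [Matrix.sub_apply, this] at hi
      exact sub_eq_zero.mp hi
    · rintro ⟨i, hi⟩
      refine ⟨i, Finset.mem_univ i, ?_⟩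
      have : (algebraMap ℂ (Matrix (Fin n) (Fin n) ℂ) μ) i i = μ := by
        rw [Matrix.algebraMap_eq_diagonal]; simp
      rw [Matrix.sub_apply, this, hi, sub_self]
  have hset : {r : ℝ | ∃ μ ∈ spectrum ℂ (A.map Complex.ofReal), r = ‖μ‖}
      = ↑(Finset.univ.image fun i : Fin n => ‖T i i‖) := by
    ext r
    simp only [hspec, hspecT, Set.mem_setOf_eq, Finset.coe_image, Set.mem_image,
      Finset.mem_coe, Finset.coe_univ, Set.mem_univ, true_and]
    constructor
    · rintro ⟨μ, ⟨i, rfl⟩, rfl⟩; exact ⟨i, rfl⟩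
    · rintro ⟨i, rfl⟩; exact ⟨T i i, ⟨i, rfl⟩, rfl⟩
  have hne : (Finset.univ.image fun i : Fin n => ‖T i i‖).Nonempty := by
    apply Finset.Nonempty.image
    exact ⟨⟨0, hn⟩, Finset.mem_univ _⟩
  have hmax : specRad A = (Finset.univ.image fun i : Fin n => ‖T i i‖).max' hne := by
    rw [specRad, hset]
    exact hne.csSup_eq_max'
  constructor
  · intro i
    rw [hmax]
    exact Finset.le_max' (Finset.univ.image fun k : Fin n => ‖T k k‖)
      (‖T i i‖) (Finset.mem_image_of_mem _ (Finset.mem_univ i))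
  · have := Finset.max'_mem _ hne
    rw [Finset.mem_image] at this
    obtain ⟨i, _, hi⟩ := this
    exact ⟨i, by rw [hmax, ← hi]⟩

/-- For a commuting family `M_K` of `n×n` real matrices with entries bounded by `K`, and
any `ε > 0`, there is a (submultiplicative) matrix norm `‖·‖⋆` with
`ρ(A) ≤ ‖A‖⋆ ≤ ρ(A) + ε` for every `A ∈ M_K`. -/
theorem stmt14 {n : ℕ} (K : ℝ) (hK : 0 < K)
    (Mfam : Set (Matrix (Fin n) (Fin n) ℝ))
    (hbd : ∀ M ∈ Mfam, ∀ i j, |M i j| ≤ K)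
    (hcomm : ∀ M₁ ∈ Mfam, ∀ M₂ ∈ Mfam, M₁ * M₂ = M₂ * M₁)
    (ε : ℝ) (hε : 0 < ε) :
    ∃ N : Matrix (Fin n) (Fin n) ℝ → ℝ,
      (∀ X, 0 ≤ N X) ∧
      (∀ X, N X = 0 ↔ X = 0) ∧
      (∀ (c : ℝ) (X), N (c • X) = |c| * N X) ∧
      (∀ X Y, N (X + Y) ≤ N X + N Y) ∧
      (∀ X Y, N (X * Y) ≤ N X * N Y) ∧
      (∀ A ∈ Mfam, specRad A ≤ N A ∧ N A ≤ specRad A + ε) := by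
  rcases Nat.eq_zero_or_pos n with hn0 | hn
  · -- trivial case n = 0
    subst hn0
    haveI hsR : Subsingleton (Matrix (Fin 0) (Fin 0) ℝ) :=
      ⟨fun a b => by ext i j; exact i.elim0⟩
    haveI hsC : Subsingleton (Matrix (Fin 0) (Fin 0) ℂ) :=
      ⟨fun a b => by ext i j; exact i.elim0⟩
    have hspec0 : ∀ A : Matrix (Fin 0) (Fin 0) ℝ, specRad A = 0 := by
      intro A
      have : {r : ℝ | ∃ μ ∈ spectrum ℂ (A.map Complex.ofReal), r = ‖μ‖} = ∅ := by
        ext r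
        simp only [Set.mem_setOf_eq, Set.mem_empty_iff_false, iff_false, not_exists]
        rintro μ ⟨hμ, -⟩
        exact absurd (isUnit_of_subsingleton _) (spectrum.mem_iff.mp hμ)
      rw [specRad, this, Real.sSup_empty]
    refine ⟨fun _ => 0, fun _ => le_refl 0, ?_, ?_, ?_, ?_, ?_⟩
    · intro X; simp [Subsingleton.elim X 0]
    · intro c X; simp
    · intro X Y; simp
    · intro X Y; simp
    · intro A _
      rw [hspec0 A]
      refine ⟨le_refl 0, ?_⟩
      show (0 : ℝ) ≤ 0 + ε
      linarith
  · -- main case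
    set S : Set (Module.End ℂ (Fin n → ℂ)) :=
      (fun A : Matrix (Fin n) (Fin n) ℝ =>
        Matrix.toLinAlgEquiv' (A.map Complex.ofReal)) '' Mfam with hSdef
    have hmapmul : ∀ A B : Matrix (Fin n) (Fin n) ℝ,
        (A * B).map Complex.ofReal = A.map Complex.ofReal * B.map Complex.ofReal := by
      intro A B
      exact Matrix.map_mul (f := Complex.ofRealHom)
    have hScomm : ∀ f ∈ S, ∀ g ∈ S, Commute f g := by
      rintro _ ⟨A, hA, rfl⟩ _ ⟨B, hB, rfl⟩
      show _ * _ = _ * _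
      rw [← _root_.map_mul, ← _root_.map_mul, ← hmapmul, ← hmapmul, hcomm A hA B hB]
    obtain ⟨b, hb⟩ := exists_triangularizing_basis n S hScomm
    set Φ : Matrix (Fin n) (Fin n) ℂ ≃ₐ[ℂ] Matrix (Fin n) (Fin n) ℂ :=
      Matrix.toLinAlgEquiv'.trans (LinearMap.toMatrixAlgEquiv b) with hΦ
    set T : Matrix (Fin n) (Fin n) ℝ → Matrix (Fin n) (Fin n) ℂ :=
      fun A => Φ (A.map Complex.ofReal) with hT
    have htri : ∀ A ∈ Mfam, ∀ i j : Fin n, (j : ℕ) < (i : ℕ) → T A i j = 0 := by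
      intro A hA i j hij
      have h1 := hb (Matrix.toLinAlgEquiv' (A.map Complex.ofReal)) ⟨A, hA, rfl⟩ i j hij
      rw [LinearMap.toMatrix_apply] at h1
      simp only [hT, hΦ, AlgEquiv.trans_apply, LinearMap.toMatrixAlgEquiv_apply]
      exact h1
    have hspec : ∀ A : Matrix (Fin n) (Fin n) ℝ,
        spectrum ℂ (A.map Complex.ofReal) = spectrum ℂ (T A) :=
      fun A => (AlgEquiv.spectrum_eq Φ (A.map Complex.ofReal)).symm
    -- bound on entries of T A for A ∈ Mfam
    letI : SeminormedAddCommGroup (Matrix (Fin n) (Fin n) ℂ →L[ℂ] Matrix (Fin n) (Fin n) ℂ) :=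
      ContinuousLinearMap.toSeminormedAddCommGroup
    set Cop : ℝ := ‖LinearMap.toContinuousLinearMap (Φ.toLinearMap)‖ with hCop
    set Cb : ℝ := Cop * (n * K) + 1 with hCb
    have hCop0 : 0 ≤ Cop := norm_nonneg _
    have hnK0 : 0 ≤ (n : ℝ) * K := by positivity
    have hCb1 : 1 ≤ Cb := by
      rw [hCb]; nlinarith
    have hCb0 : 0 < Cb := lt_of_lt_of_le one_pos hCb1
    have hTbd : ∀ A ∈ Mfam, ∀ i j, ‖T A i j‖ ≤ Cb := by
      intro A hA i j
      have h1 : ‖T A i j‖ ≤ ‖T A‖ := entry_norm_le _ i j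
      have h2 : ‖T A‖ ≤ Cop * ‖A.map Complex.ofReal‖ := by
        have := (LinearMap.toContinuousLinearMap (Φ.toLinearMap)).le_opNorm
          (A.map Complex.ofReal)
        exact this
      have h3 : ‖A.map Complex.ofReal‖ ≤ (n : ℝ) * K := by
        apply norm_le_of_rows _ _ hnK0
        intro i
        have : ∀ j, ‖(A.map Complex.ofReal) i j‖ ≤ K := by
          intro j
          simp only [Matrix.map_apply, Complex.norm_real, Real.norm_eq_abs]
          exact hbd A hA i j
        calc ∑ j, ‖(A.map Complex.ofReal) i j‖ ≤ ∑ _j : Fin n, K :=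
              Finset.sum_le_sum fun j _ => this j
          _ = n * K := by simp [Finset.sum_const, nsmul_eq_mul]
      calc ‖T A i j‖ ≤ Cop * ‖A.map Complex.ofReal‖ := h1.trans h2
        _ ≤ Cop * ((n : ℝ) * K) := mul_le_mul_of_nonneg_left h3 hCop0
        _ ≤ Cb := by rw [hCb]; linarith
    -- choice of t
    set t : ℝ := max 1 ((n : ℝ) * Cb / ε) with ht
    have ht1 : 1 ≤ t := le_max_left _ _
    have ht0 : 0 < t := lt_of_lt_of_le one_pos ht1
    have htne : (t : ℝ) ≠ 0 := ne_of_gt ht0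
    have htCne : (t : ℂ) ≠ 0 := by exact_mod_cast htne
    have htC : (n : ℝ) * Cb * t⁻¹ ≤ ε := by
      have h1 : (n : ℝ) * Cb / ε ≤ t := le_max_right _ _
      rw [div_le_iff₀ hε] at h1
      rw [← div_eq_mul_inv, div_le_iff₀ ht0]
      linarith
    set D : Matrix (Fin n) (Fin n) ℂ := Matrix.diagonal (fun i : Fin n => (t : ℂ) ^ (i : ℕ))
      with hD
    set Dinv : Matrix (Fin n) (Fin n) ℂ :=
      Matrix.diagonal (fun i : Fin n => ((t : ℂ)⁻¹) ^ (i : ℕ)) with hDinv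
    have hDD : D * Dinv = 1 := by
      rw [hD, hDinv, Matrix.diagonal_mul_diagonal]
      have hfun : (fun i : Fin n => (t : ℂ) ^ (i : ℕ) * ((t : ℂ)⁻¹) ^ (i : ℕ))
          = fun _ => (1 : ℂ) := by
        funext i
        rw [← mul_pow, mul_inv_cancel₀ htCne, one_pow]
      rw [hfun, Matrix.diagonal_one]
    have hDD' : Dinv * D = 1 := by
      rw [hD, hDinv, Matrix.diagonal_mul_diagonal]
      have hfun : (fun i : Fin n => ((t : ℂ)⁻¹) ^ (i : ℕ) * (t : ℂ) ^ (i : ℕ))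
          = fun _ => (1 : ℂ) := by
        funext i
        rw [← mul_pow, inv_mul_cancel₀ htCne, one_pow]
      rw [hfun, Matrix.diagonal_one]
    set G : Matrix (Fin n) (Fin n) ℝ → Matrix (Fin n) (Fin n) ℂ :=
      fun X => D * T X * Dinv with hG
    have hGmul : ∀ X Y, G (X * Y) = G X * G Y := by
      intro X Y
      simp only [hG, hT]
      rw [hmapmul, _root_.map_mul]
      simp only [Matrix.mul_assoc]
      rw [← Matrix.mul_assoc Dinv D, hDD', Matrix.one_mul]
    have hGent : ∀ X (i j : Fin n), G X i j = (t : ℂ) ^ (i : ℕ) * T X i j * ((t : ℂ)⁻¹) ^ (j : ℕ) := by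
      intro X i j
      simp only [hG, hD, hDinv]
      rw [Matrix.mul_diagonal, Matrix.diagonal_mul]
    have hGnorment : ∀ X (i j : Fin n),
        ‖G X i j‖ = t ^ (i : ℕ) * ‖T X i j‖ * (t⁻¹) ^ (j : ℕ) := by
      intro X i j
      rw [hGent, norm_mul, norm_mul, norm_pow, norm_pow]
      have h1 : ‖(t : ℂ)‖ = t := by
        rw [Complex.norm_real, Real.norm_eq_abs, abs_of_pos ht0]
      have h2 : ‖(t : ℂ)⁻¹‖ = t⁻¹ := by
        rw [norm_inv, h1]
      rw [h1, h2]
    set N : Matrix (Fin n) (Fin n) ℝ → ℝ := fun X => ‖G X‖ with hN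
    have hGdiag : ∀ X (i : Fin n), ‖G X i i‖ = ‖T X i i‖ := by
      intro X i
      rw [hGnorment]
      rw [mul_comm (t ^ (i : ℕ)) ‖T X i i‖, mul_assoc, ← mul_pow, mul_inv_cancel₀ htne,
        one_pow, mul_one]
    refine ⟨N, fun X => norm_nonneg _, ?_, ?_, ?_, ?_, ?_⟩
    · -- definiteness
      intro X
      simp only [hN]
      rw [norm_eq_zero]
      constructor
      · intro h
        have h2 : T X = Dinv * (D * T X * Dinv) * D := by
          simp only [Matrix.mul_assoc]
          rw [← Matrix.mul_assoc Dinv D, hDD', Matrix.one_mul, Matrix.mul_one]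
        simp only [hG] at h
        rw [h, Matrix.mul_zero, Matrix.zero_mul] at h2
        simp only [hT] at h2
        have h3 : X.map Complex.ofReal = 0 := by
          apply Φ.injective
          rw [map_zero]
          exact h2
        have h4 : X.map Complex.ofReal = (0 : Matrix (Fin n) (Fin n) ℝ).map Complex.ofReal := by
          rw [h3]; ext i j; simp
        exact Matrix.map_injective Complex.ofReal_injective h4
      · intro h
        have hz : (0 : Matrix (Fin n) (Fin n) ℝ).map Complex.ofReal = 0 := by ext i j; simp
        simp only [h, hG, hT, hz, map_zero, Matrix.mul_zero, Matrix.zero_mul]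
    · -- scalar homogeneity
      intro c X
      simp only [hN]
      have h1 : (c • X).map Complex.ofReal = (c : ℂ) • X.map Complex.ofReal := by
        ext i j; simp
      have h2 : G (c • X) = (c : ℂ) • G X := by
        simp only [hG, hT]
        rw [h1, _root_.map_smul, Matrix.mul_smul, Matrix.smul_mul]
      rw [h2, norm_smul, Complex.norm_real, Real.norm_eq_abs]
    · -- triangle inequality
      intro X Y
      simp only [hN]
      have h1 : (X + Y).map Complex.ofReal = X.map Complex.ofReal + Y.map Complex.ofReal := by
        ext i j; simp
      have h2 : G (X + Y) = G X + G Y := by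
        simp only [hG, hT]
        rw [h1, _root_.map_add, Matrix.mul_add, Matrix.add_mul]
      rw [h2]
      exact norm_add_le _ _
    · -- submultiplicativity
      intro X Y
      simp only [hN]
      rw [hGmul]
      exact Matrix.linfty_opNorm_mul _ _
    · -- spectral bounds
      intro A hA
      obtain ⟨hd1, hd2⟩ := specRad_triangular hn A (T A) (hspec A) (htri A hA)
      have hrad0 : 0 ≤ specRad A := by
        obtain ⟨i, hi⟩ := hd2
        rw [hi]
        exact norm_nonneg _
      constructor
      · -- lower bound
        obtain ⟨i, hi⟩ := hd2
        rw [hi]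
        have : ‖T A i i‖ = ‖G A i i‖ := by
          rw [hGdiag]
        rw [this]
        exact entry_norm_le _ i i
      · -- upper bound
        simp only [hN]
        apply norm_le_of_rows _ _ (by linarith)
        intro i
        have hsplit : ∑ j, ‖G A i j‖
            = ‖G A i i‖ + ∑ j ∈ Finset.univ.erase i, ‖G A i j‖ :=
          (Finset.add_sum_erase _ _ (Finset.mem_univ i)).symm
        have hdiag : ‖G A i i‖ ≤ specRad A := by
          rw [hGdiag]
          exact hd1 i
        have hoff : ∀ j ∈ Finset.univ.erase i, ‖G A i j‖ ≤ Cb * t⁻¹ := by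
          intro j hj
          have hji : j ≠ i := Finset.ne_of_mem_erase hj
          rcases lt_or_gt_of_ne (fun h => hji (Fin.ext h) : (j : ℕ) ≠ (i : ℕ)) with h | h
          · -- j < i: entry is zero
            rw [hGnorment, htri A hA i j h]
            simp only [norm_zero, mul_zero, zero_mul]
            positivity
          · -- i < j
            rw [hGnorment]
            have hfac : t ^ (i : ℕ) * (t⁻¹) ^ (j : ℕ) ≤ t⁻¹ := by
              have hij' : (i : ℕ) + ((j : ℕ) - (i : ℕ)) = (j : ℕ) := by omega
              have h2 : (t⁻¹ : ℝ) ^ (j : ℕ)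
                  = (t⁻¹) ^ (i : ℕ) * (t⁻¹) ^ ((j : ℕ) - (i : ℕ)) := by
                rw [← pow_add, hij']
              rw [h2, ← mul_assoc, ← mul_pow, mul_inv_cancel₀ htne, one_pow, one_mul]
              have h3 : (t⁻¹ : ℝ) ≤ 1 := inv_le_one_of_one_le₀ ht1
              have h4 : (0:ℝ) ≤ t⁻¹ := by positivity
              have h5 : 1 ≤ (j : ℕ) - (i : ℕ) := by omega
              calc (t⁻¹ : ℝ) ^ ((j : ℕ) - (i : ℕ)) ≤ (t⁻¹) ^ 1 :=
                    pow_le_pow_of_le_one h4 h3 h5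
                _ = t⁻¹ := pow_one _
            have hTb := hTbd A hA i j
            have hfac0 : 0 ≤ t ^ (i : ℕ) * (t⁻¹) ^ (j : ℕ) := by positivity
            calc t ^ (i : ℕ) * ‖T A i j‖ * (t⁻¹) ^ (j : ℕ)
                = (t ^ (i : ℕ) * (t⁻¹) ^ (j : ℕ)) * ‖T A i j‖ := by ring
              _ ≤ t⁻¹ * Cb := by
                  apply mul_le_mul hfac hTb (norm_nonneg _)
                  positivity
              _ = Cb * t⁻¹ := by ring
        have hcard : ((Finset.univ.erase i).card : ℝ) ≤ (n : ℝ) := by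
          have := Finset.card_erase_le (s := (Finset.univ : Finset (Fin n))) (a := i)
          have h2 : (Finset.univ : Finset (Fin n)).card = n := by simp
          exact_mod_cast le_trans this (le_of_eq h2)
        have hsum : ∑ j ∈ Finset.univ.erase i, ‖G A i j‖
            ≤ ((Finset.univ.erase i).card : ℝ) * (Cb * t⁻¹) := by
          have := Finset.sum_le_card_nsmul (Finset.univ.erase i) (fun j => ‖G A i j‖)
            (Cb * t⁻¹) (fun j hj => hoff j hj)
          simpa [nsmul_eq_mul] using this
        have hCbt0 : 0 ≤ Cb * t⁻¹ := by positivity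
        calc ∑ j, ‖G A i j‖ = ‖G A i i‖ + ∑ j ∈ Finset.univ.erase i, ‖G A i j‖ := hsplit
          _ ≤ specRad A + ((Finset.univ.erase i).card : ℝ) * (Cb * t⁻¹) :=
              add_le_add hdiag hsum
          _ ≤ specRad A + (n : ℝ) * (Cb * t⁻¹) :=
              add_le_add_right (mul_le_mul_of_nonneg_right hcard hCbt0) _
          _ = specRad A + (n : ℝ) * Cb * t⁻¹ := by ring
          _ ≤ specRad A + ε := add_le_add_right htC _
end

section
/- Threshold/phase-transition for convergence in expectation: suppose L_att L_rep = L_rep L_att, G_att has a spanning tree (so ρ((I − 𝟏𝟏^T/n)(I − (α/n)L_att)) < 1 for fixed α ∈ (0,1]), and L_rep ≠ 0. Define f(β) = ρ((I − 𝟏𝟁^T/n)(I − (α/n)L_att + (β/n)L_rep)). Then the set {β ≥ 0 : f(β) > 1} is nonempty and upward closed (if f(β₁) > 1 and β₂ > β₁ then f(β₂) > 1); hence β⋆ = inf{β ≥ 0 : f(β) > 1} is finite and: f(β) < 1 for 0 ≤ β < β⋆ while f(β) > 1 for β > β⋆. -/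
open Matrix

section Aux

open Polynomial

lemma aux_charmatrix_map_eval {m : ℕ} (A : Matrix (Fin m) (Fin m) ℂ) (μ : ℂ) :
    (charmatrix A).map (Polynomial.evalRingHom μ) = (algebraMap ℂ _ μ) - A := by
  ext i j
  simp [Matrix.charmatrix_apply, Matrix.map_apply, Matrix.algebraMap_matrix_apply,
    Matrix.diagonal_apply, Matrix.sub_apply]
  split <;> simp

lemma aux_mem_spectrum_iff_root {m : ℕ} (A : Matrix (Fin m) (Fin m) ℂ) (μ : ℂ) :
    μ ∈ spectrum ℂ A ↔ A.charpoly.IsRoot μ := by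
  rw [spectrum.mem_iff, Matrix.isUnit_iff_isUnit_det, isUnit_iff_ne_zero, not_ne_iff]
  rw [Polynomial.IsRoot, Matrix.charpoly]
  have : eval μ (charmatrix A).det = ((charmatrix A).map (Polynomial.evalRingHom μ)).det :=
    RingHom.map_det (Polynomial.evalRingHom μ) _
  rw [this, aux_charmatrix_map_eval]

lemma aux_specSet_eq {n : ℕ} (A : Matrix (Fin n) (Fin n) ℝ) :
    {r : ℝ | ∃ μ ∈ spectrum ℂ (A.map Complex.ofReal), r = ‖μ‖}
      = (‖·‖) '' spectrum ℂ (A.map Complex.ofReal) := by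
  ext r; simp [eq_comm, Set.mem_image]

lemma aux_specSet_bddAbove {n : ℕ} (A : Matrix (Fin n) (Fin n) ℝ) :
    BddAbove {r : ℝ | ∃ μ ∈ spectrum ℂ (A.map Complex.ofReal), r = ‖μ‖} := by
  rw [aux_specSet_eq]
  exact ((Matrix.finite_spectrum _).image _).bddAbove

lemma aux_abs_le_specRad {n : ℕ} (A : Matrix (Fin n) (Fin n) ℝ) {μ : ℂ}
    (hμ : μ ∈ spectrum ℂ (A.map Complex.ofReal)) : ‖μ‖ ≤ specRad A :=
  le_csSup (aux_specSet_bddAbove A) ⟨μ, hμ, rfl⟩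

lemma aux_spectrum_map_nonempty {n : ℕ} (hn : 0 < n) (A : Matrix (Fin n) (Fin n) ℝ) :
    (spectrum ℂ (A.map Complex.ofReal)).Nonempty := by
  have : Nonempty (Fin n) := ⟨⟨0, hn⟩⟩
  exact spectrum.nonempty_of_isAlgClosed_of_finiteDimensional ℂ _

lemma aux_specRad_nonneg {n : ℕ} (hn : 0 < n) (A : Matrix (Fin n) (Fin n) ℝ) :
    0 ≤ specRad A := by
  obtain ⟨μ, hμ⟩ := aux_spectrum_map_nonempty hn A
  exact le_trans (norm_nonneg μ) (aux_abs_le_specRad A hμ)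

lemma aux_trace_map_eq {n : ℕ} (A : Matrix (Fin n) (Fin n) ℝ) :
    (A.map Complex.ofReal).trace = (A.trace : ℂ) := by
  simp [Matrix.trace, Matrix.map_apply, Matrix.diag]

lemma aux_abs_trace_le {n : ℕ} (hn : 0 < n) (A : Matrix (Fin n) (Fin n) ℝ) :
    |A.trace| ≤ (n : ℝ) * specRad A := by
  have : Nonempty (Fin n) := ⟨⟨0, hn⟩⟩
  set A' := A.map Complex.ofReal with hA'
  have htr : A'.trace = A'.charpoly.roots.sum := Matrix.trace_eq_sum_roots_charpoly A'
  have h1 : |A.trace| = ‖A'.trace‖ := by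
    rw [aux_trace_map_eq]; simp
  have h2 : ‖A'.trace‖ ≤ (A'.charpoly.roots.map (‖·‖)).sum := by
    rw [htr]
    simpa using norm_multiset_sum_le A'.charpoly.roots
  have h3 : (A'.charpoly.roots.map (‖·‖)).sum
      ≤ (Multiset.card (A'.charpoly.roots.map (‖·‖))) • specRad A := by
    apply Multiset.sum_le_card_nsmul
    intro x hx
    obtain ⟨μ, hμ, rfl⟩ := Multiset.mem_map.mp hx
    apply aux_abs_le_specRad
    rw [aux_mem_spectrum_iff_root]
    exact (Polynomial.mem_roots (A'.charpoly_monic.ne_zero)).mp hμ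
  have hcard : Multiset.card (A'.charpoly.roots.map (‖·‖)) ≤ n := by
    rw [Multiset.card_map]
    calc Multiset.card A'.charpoly.roots ≤ A'.charpoly.natDegree := Polynomial.card_roots' _
    _ = n := by rw [Matrix.charpoly_natDegree_eq_dim]; simp
  calc |A.trace| ≤ (Multiset.card (A'.charpoly.roots.map (‖·‖))) • specRad A :=
        le_trans (h1.le.trans h2) h3
    _ ≤ (n : ℝ) * specRad A := by
        rw [nsmul_eq_mul]
        exact mul_le_mul_of_nonneg_right (by exact_mod_cast hcard) (aux_specRad_nonneg hn A)

lemma aux_isUnit_of_mul_injective {B : Type*} [CommRing B] [Algebra ℂ B]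
    [FiniteDimensional ℂ B] [Nontrivial B] {w : B}
    (h : Function.Injective (fun v => w * v)) : IsUnit w := by
  have hsurj : Function.Surjective (LinearMap.mulLeft ℂ w) :=
    LinearMap.injective_iff_surjective.mp (by simpa [LinearMap.mulLeft] using h)
  obtain ⟨v, hv⟩ := hsurj 1
  exact IsUnit.of_mul_eq_one v (by simpa [LinearMap.mulLeft] using hv)

lemma aux_exists_char_of_not_isUnit {B : Type*} [CommRing B] [Algebra ℂ B]
    [FiniteDimensional ℂ B] [Nontrivial B] {z : B} (hz : ¬IsUnit z) :
    ∃ φ : B →ₐ[ℂ] ℂ, φ z = 0 := by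
  have hspan : Ideal.span ({z} : Set B) ≠ ⊤ := by
    simpa [Ideal.span_singleton_eq_top] using hz
  obtain ⟨M, hM, hzM⟩ := Ideal.exists_le_maximal _ hspan
  haveI : M.IsMaximal := hM
  letI : Field (B ⧸ M) := Ideal.Quotient.field M
  haveI : FiniteDimensional ℂ (B ⧸ M) := Module.Finite.quotient ℂ M
  haveI : Algebra.IsIntegral ℂ (B ⧸ M) := Algebra.IsIntegral.of_finite ℂ _
  have hsurj : Function.Surjective (algebraMap ℂ (B ⧸ M)) :=
    IsAlgClosed.algebraMap_bijective_of_isIntegral.2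
  have hbij : Function.Bijective (Algebra.ofId ℂ (B ⧸ M)) :=
    ⟨(algebraMap ℂ (B ⧸ M)).injective, hsurj⟩
  let e : ℂ ≃ₐ[ℂ] (B ⧸ M) := AlgEquiv.ofBijective (Algebra.ofId ℂ (B ⧸ M)) hbij
  refine ⟨(e.symm.toAlgHom.comp (Ideal.Quotient.mkₐ ℂ M)), ?_⟩
  have hz0 : Ideal.Quotient.mk M z = 0 :=
    (Ideal.Quotient.eq_zero_iff_mem).mpr (hzM (Ideal.subset_span rfl))
  simp [hz0]

lemma aux_spec_pair {m : ℕ} (hm : 0 < m) (X Y : Matrix (Fin m) (Fin m) ℂ)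
    (h : X * Y = Y * X) {μ : ℂ} (hμ : μ ∈ spectrum ℂ (X + Y)) :
    ∃ a ∈ spectrum ℂ X, ∃ b ∈ spectrum ℂ Y, μ = a + b := by
  have : Nonempty (Fin m) := ⟨⟨0, hm⟩⟩
  set S := Algebra.adjoin ℂ ({X, Y} : Set (Matrix (Fin m) (Fin m) ℂ)) with hS
  letI : CommRing S := Algebra.adjoinCommRingOfComm ℂ (by
    rintro a (rfl | rfl) b (rfl | rfl) <;> simp_all)
  haveI : FiniteDimensional ℂ S := inferInstance
  haveI : Nontrivial S := inferInstance
  have hXS : X ∈ S := Algebra.subset_adjoin (by simp)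
  have hYS : Y ∈ S := Algebra.subset_adjoin (by simp)
  set x : S := ⟨X, hXS⟩
  set y : S := ⟨Y, hYS⟩
  have hzA : ¬IsUnit (algebraMap ℂ (Matrix (Fin m) (Fin m) ℂ) μ - (X + Y)) :=
    spectrum.mem_iff.mp hμ
  have hz : ¬IsUnit (algebraMap ℂ S μ - (x + y)) := by
    intro hu
    exact hzA (by simpa using hu.map S.val)
  obtain ⟨φ, hφ⟩ := aux_exists_char_of_not_isUnit hz
  have hμeq : μ = φ x + φ y := by
    have h1 : μ - (φ x + φ y) = 0 := by simpa [map_sub, map_add] using hφ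
    exact sub_eq_zero.mp h1
  have key : ∀ (w : S), ¬ IsUnit
      (algebraMap ℂ (Matrix (Fin m) (Fin m) ℂ) (φ w) - (w : Matrix (Fin m) (Fin m) ℂ)) := by
    intro w hu
    have hwS : ¬IsUnit (algebraMap ℂ S (φ w) - w) := by
      intro hws
      have := hws.map φ
      simp only [map_sub, AlgHom.commutes, Algebra.algebraMap_self, RingHom.id_apply] at this
      simp at this
    have hnotinj : ¬ Function.Injective (fun v => (algebraMap ℂ S (φ w) - w) * v) := by
      intro hinj
      exact hwS (aux_isUnit_of_mul_injective hinj)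
    rw [Function.not_injective_iff] at hnotinj
    obtain ⟨v₁, v₂, hv, hne⟩ := hnotinj
    have hv0 : (algebraMap ℂ S (φ w) - w) * (v₁ - v₂) = 0 := by
      rw [mul_sub, hv, sub_self]
    have hv0' : (algebraMap ℂ (Matrix (Fin m) (Fin m) ℂ) (φ w) - (w : Matrix (Fin m) (Fin m) ℂ))
        * ((v₁ : Matrix (Fin m) (Fin m) ℂ) - (v₂ : Matrix (Fin m) (Fin m) ℂ)) = 0 := by
      have := congrArg (S.val) hv0
      simpa [_root_.map_mul, map_sub] using this
    have : (v₁ : Matrix (Fin m) (Fin m) ℂ) - (v₂ : Matrix (Fin m) (Fin m) ℂ) = 0 := by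
      obtain ⟨u, hu'⟩ := hu
      have h9 : (↑u : Matrix (Fin m) (Fin m) ℂ) * ((v₁ : Matrix (Fin m) (Fin m) ℂ) - v₂) = 0 := by
        rw [hu']; exact hv0'
      calc (v₁ : Matrix (Fin m) (Fin m) ℂ) - v₂
          = ↑(u⁻¹) * ((↑u : Matrix (Fin m) (Fin m) ℂ) * ((v₁ : Matrix (Fin m) (Fin m) ℂ) - v₂)) := by
            rw [← mul_assoc, Units.inv_mul, one_mul]
        _ = 0 := by rw [h9, mul_zero]
    apply hne
    have h2 : (v₁ : Matrix (Fin m) (Fin m) ℂ) = v₂ := sub_eq_zero.mp this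
    exact Subtype.ext h2
  exact ⟨φ x, spectrum.mem_iff.mpr (key x), φ y, spectrum.mem_iff.mpr (key y), hμeq⟩

lemma aux_map_smul_ofReal {n : ℕ} (s : ℝ) (P : Matrix (Fin n) (Fin n) ℝ) :
    (s • P).map Complex.ofReal = (s : ℂ) • P.map Complex.ofReal := by
  ext i j; simp [Matrix.map_apply, Matrix.smul_apply]

lemma aux_map_mul_ofReal {n : ℕ} (P Q : Matrix (Fin n) (Fin n) ℝ) :
    (P * Q).map Complex.ofReal = P.map Complex.ofReal * Q.map Complex.ofReal := by
  ext i j; simp [Matrix.map_apply, Matrix.mul_apply]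

lemma aux_map_add_ofReal {n : ℕ} (P Q : Matrix (Fin n) (Fin n) ℝ) :
    (P + Q).map Complex.ofReal = P.map Complex.ofReal + Q.map Complex.ofReal := by
  ext i j; simp [Matrix.map_apply]

lemma aux_abs_le_smul_specRad {n : ℕ} (hn : 0 < n) (P : Matrix (Fin n) (Fin n) ℝ) {s : ℝ}
    (hs : 0 ≤ s) {a : ℂ} (ha : a ∈ spectrum ℂ ((s : ℂ) • P.map Complex.ofReal)) :
    ‖a‖ ≤ s * specRad P := by
  have : Nonempty (Fin n) := ⟨⟨0, hn⟩⟩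
  rcases eq_or_lt_of_le hs with h0 | h0
  · have hs0 : (s : ℂ) = 0 := by rw [← h0]; simp
    rw [hs0, zero_smul, spectrum.zero_eq] at ha
    simp only [Set.mem_singleton_iff] at ha
    simp [ha, ← h0]
  · have hsne : (s : ℂ) ≠ 0 := by exact_mod_cast h0.ne'
    set u : ℂˣ := Units.mk0 (s : ℂ) hsne
    have : ((s : ℂ) • P.map Complex.ofReal) = u • P.map Complex.ofReal := rfl
    rw [this, spectrum.unit_smul_eq_smul] at ha
    obtain ⟨b, hb, rfl⟩ := ha
    have : ‖(u : ℂ) * b‖ = s * ‖b‖ := by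
      simp [u, abs_of_pos h0]
    calc ‖u • b‖ = s * ‖b‖ := by simpa [Units.smul_def] using this
      _ ≤ s * specRad P := mul_le_mul_of_nonneg_left (aux_abs_le_specRad P hb) hs

lemma aux_specRad_combo {n : ℕ} (hn : 0 < n) (P Q : Matrix (Fin n) (Fin n) ℝ)
    (hPQ : P * Q = Q * P) {s t : ℝ} (hs : 0 ≤ s) (ht : 0 ≤ t) :
    specRad (s • P + t • Q) ≤ s * specRad P + t * specRad Q := by
  apply Real.sSup_le
  · rintro r ⟨μ, hμ, rfl⟩
    rw [aux_map_add_ofReal, aux_map_smul_ofReal, aux_map_smul_ofReal] at hμ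
    have hcomm : ((s : ℂ) • P.map Complex.ofReal) * ((t : ℂ) • Q.map Complex.ofReal)
        = ((t : ℂ) • Q.map Complex.ofReal) * ((s : ℂ) • P.map Complex.ofReal) := by
      rw [smul_mul_assoc, mul_smul_comm, smul_mul_assoc, mul_smul_comm, ← aux_map_mul_ofReal,
        ← aux_map_mul_ofReal, hPQ, smul_comm]
    obtain ⟨a, ha, b, hb, rfl⟩ := aux_spec_pair hn _ _ hcomm hμ
    calc ‖a + b‖ ≤ ‖a‖ + ‖b‖ := norm_add_le _ _
      _ ≤ s * specRad P + t * specRad Q :=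
        add_le_add (aux_abs_le_smul_specRad hn P hs ha) (aux_abs_le_smul_specRad hn Q ht hb)
  · have := aux_specRad_nonneg hn P; have := aux_specRad_nonneg hn Q
    positivity

end Aux

/-- Phase transition for convergence in expectation: suppose the weighted Laplacians
`L_att` and `L_rep` commute, `G_att` has a spanning tree (so that
`f(0) = ρ((I − 𝟏𝟏ᵀ/n)(I − (α/n)L_att)) < 1` for the fixed `α ∈ (0,1]`), and `L_rep ≠ 0`.
With `f(β) = ρ((I − 𝟏𝟏ᵀ/n)(I − (α/n)L_att + (β/n)L_rep))`, the set
`{β ≥ 0 : f(β) > 1}` is nonempty and upward closed, hence `β⋆ = inf{β ≥ 0 : f(β) > 1}`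
is finite, and `f(β) < 1` for `0 ≤ β < β⋆` while `f(β) > 1` for `β > β⋆`. -/
theorem stmt15 {n : ℕ} (hn : 3 ≤ n)
    (α : ℝ) (hα : 0 < α ∧ α ≤ 1)
    (Latt Lrep J : Matrix (Fin n) (Fin n) ℝ)
    (hJ : J = (n : ℝ)⁻¹ • Matrix.of (fun _ _ : Fin n => (1 : ℝ)))
    -- Laplacian structure: zero row sums, nonnegative diagonal, nonpositive off-diagonal
    (hattRow : Latt *ᵥ (fun _ => 1) = 0)
    (hrepRow : Lrep *ᵥ (fun _ => 1) = 0)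
    (hattDiag : ∀ i, 0 ≤ Latt i i) (hattOff : ∀ i j, i ≠ j → Latt i j ≤ 0)
    (hrepDiag : ∀ i, 0 ≤ Lrep i i) (hrepOff : ∀ i j, i ≠ j → Lrep i j ≤ 0)
    (hcomm : Latt * Lrep = Lrep * Latt)
    (hrepNe : Lrep ≠ 0)
    (f : ℝ → ℝ)
    (hf : ∀ β, f β = specRad ((1 - J) * (1 - (α / n) • Latt + (β / n) • Lrep)))
    -- `G_att` has a spanning tree, hence convergence without repulsive links:
    (htree : f 0 < 1)
    (βstar : ℝ)
    (hβstar : βstar = sInf {β : ℝ | 0 ≤ β ∧ 1 < f β}) :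
    {β : ℝ | 0 ≤ β ∧ 1 < f β}.Nonempty ∧
    (∀ β₁ β₂, 0 ≤ β₁ → β₁ < β₂ → 1 < f β₁ → 1 < f β₂) ∧
    (∀ β, 0 ≤ β → (β < βstar → f β < 1) ∧ (βstar < β → 1 < f β)) := by
  have hn0 : 0 < n := by omega
  have hnR : (0:ℝ) < n := by exact_mod_cast hn0
  set ones : Matrix (Fin n) (Fin n) ℝ := Matrix.of (fun _ _ => (1:ℝ)) with hones
  set A : ℝ → Matrix (Fin n) (Fin n) ℝ :=
    fun β => 1 - (α / n) • Latt + (β / n) • Lrep with hA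
  set M : ℝ → Matrix (Fin n) (Fin n) ℝ := fun β => (1 - J) * A β with hM
  have hfM : ∀ β, f β = specRad (M β) := by
    intro β
    simp only [hM, hA]
    exact hf β
  -- basic matrix identities
  have hLo : Latt * ones = 0 := by
    ext i j
    have := congrFun hattRow i
    simpa [Matrix.mul_apply, Matrix.mulVec, dotProduct, hones] using this
  have hRo : Lrep * ones = 0 := by
    ext i j
    have := congrFun hrepRow i
    simpa [Matrix.mul_apply, Matrix.mulVec, dotProduct, hones] using this
  have honeso : ones * ones = (n : ℝ) • ones := by
    ext i j
    simp [Matrix.mul_apply, hones, Matrix.smul_apply]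
  have hAones : ∀ β, A β * ones = ones := by
    intro β
    simp only [hA]
    rw [add_mul, sub_mul, one_mul, smul_mul_assoc, smul_mul_assoc, hLo, hRo, smul_zero,
      smul_zero, sub_zero, add_zero]
  have hAJ : ∀ β, A β * J = J := by
    intro β
    rw [hJ, mul_smul_comm, hAones]
  have hJJ : J * J = J := by
    rw [hJ, smul_mul_assoc, mul_smul_comm, honeso, smul_smul, smul_smul]
    congr 1
    field_simp
  have hAc : ∀ β₁ β₂, A β₁ * A β₂ = A β₂ * A β₁ := by
    intro β₁ β₂
    have h1 : Commute Latt Lrep := hcomm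
    have key : Commute (A β₁) (A β₂) := by
      simp only [hA]
      apply Commute.add_left
      · apply Commute.add_right
        · exact Commute.refl _
        · exact Commute.sub_left (Commute.one_left _)
            ((h1.smul_left (α / (n:ℝ))).smul_right (β₂ / (n:ℝ)))
      · apply Commute.add_right
        · exact Commute.sub_right (Commute.one_right _)
            ((h1.symm.smul_left (β₁ / (n:ℝ))).smul_right (α / (n:ℝ)))
        · exact ((Commute.refl Lrep).smul_left (β₁ / (n:ℝ))).smul_right (β₂ / (n:ℝ))
    exact key
  have hMM : ∀ β₁ β₂, M β₁ * M β₂ = (1 - J) * (A β₁ * A β₂) := by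
    intro β₁ β₂
    simp only [hM]
    calc ((1 - J) * A β₁) * ((1 - J) * A β₂)
        = (1 - J) * ((A β₁ * (1 - J)) * A β₂) := by rw [mul_assoc, ← mul_assoc (A β₁)]
      _ = (1 - J) * ((A β₁ - J) * A β₂) := by rw [mul_sub (A β₁), mul_one, hAJ]
      _ = (1 - J) * (A β₁ * A β₂) - ((1 - J) * J) * A β₂ := by
          rw [sub_mul (A β₁) J (A β₂), mul_sub (1 - J), mul_assoc]
      _ = (1 - J) * (A β₁ * A β₂) := by
          have hz : (1 - J) * J = 0 := by rw [sub_mul, one_mul, hJJ, sub_self]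
          rw [hz, zero_mul, sub_zero]
  have hMc : ∀ β₁ β₂, M β₁ * M β₂ = M β₂ * M β₁ := by
    intro β₁ β₂; rw [hMM, hMM, hAc]
  have hcombo : ∀ s t β₁ β₂ : ℝ, s + t = 1 → M (s*β₁ + t*β₂) = s • M β₁ + t • M β₂ := by
    intro s t β₁ β₂ hst
    simp only [hM, hA]
    rw [← mul_smul_comm s, ← mul_smul_comm t, ← mul_add]
    congr 1
    have ht' : t = 1 - s := by linarith
    subst ht'
    match_scalars <;> ring
  -- convexity of f
  have hconv : ∀ β₁ β₂ s t : ℝ, 0 ≤ s → 0 ≤ t → s + t = 1 →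
      f (s*β₁ + t*β₂) ≤ s * f β₁ + t * f β₂ := by
    intro β₁ β₂ s t hs ht hst
    rw [hfM, hfM, hfM, hcombo s t β₁ β₂ hst]
    exact aux_specRad_combo hn0 (M β₁) (M β₂) (hMc β₁ β₂) hs ht
  -- trace computations
  have hArow : ∀ β k, ∑ i, A β k i = 1 := by
    intro β k
    have h1 : ∑ i, Latt k i = 0 := by
      have := congrFun hattRow k
      simpa [Matrix.mulVec, dotProduct] using this
    have h2 : ∑ i, Lrep k i = 0 := by
      have := congrFun hrepRow k
      simpa [Matrix.mulVec, dotProduct] using this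
    simp only [hA, Matrix.add_apply, Matrix.sub_apply, Matrix.smul_apply, smul_eq_mul]
    rw [Finset.sum_add_distrib, Finset.sum_sub_distrib, ← Finset.mul_sum, ← Finset.mul_sum,
      h1, h2]
    simp [Matrix.one_apply]
  have htrJA : ∀ β, (J * A β).trace = 1 := by
    intro β
    have hstep : (J * A β).trace = (n:ℝ)⁻¹ * ∑ i, ∑ k, A β k i := by
      simp only [Matrix.trace, Matrix.diag, Matrix.mul_apply, hJ, hones, Matrix.smul_apply,
        Matrix.of_apply, smul_eq_mul, mul_one]
      simp [Finset.mul_sum]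
    rw [hstep]
    have : ∑ i : Fin n, ∑ k : Fin n, A β k i = n := by
      rw [Finset.sum_comm]
      simp [hArow]
    rw [this]
    field_simp
  have htrA : ∀ β, (A β).trace = (n : ℝ) - (α/n)*Latt.trace + (β/n)*Lrep.trace := by
    intro β
    simp only [hA]
    rw [Matrix.trace_add, Matrix.trace_sub, Matrix.trace_smul, Matrix.trace_smul,
      Matrix.trace_one]
    simp [smul_eq_mul, Fintype.card_fin]
  have htrM : ∀ β, (M β).trace = ((n:ℝ) - 1) - (α/n)*Latt.trace + (β/n)*Lrep.trace := by
    intro β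
    simp only [hM]
    rw [sub_mul, one_mul, Matrix.trace_sub, htrJA, htrA]
    ring
  -- positivity of the repulsive trace
  have hTr : 0 < Lrep.trace := by
    rcases lt_or_eq_of_le (Finset.sum_nonneg (fun i _ => hrepDiag i)) with h | h
    · exact h
    · exfalso
      apply hrepNe
      have hdiag : ∀ i, Lrep i i = 0 := by
        intro i
        have := (Finset.sum_eq_zero_iff_of_nonneg (fun i _ => hrepDiag i)).mp h.symm
        exact this i (Finset.mem_univ i)
      ext i j
      have hrow : ∑ k, Lrep i k = 0 := by
        have := congrFun hrepRow i
        simpa [Matrix.mulVec, dotProduct] using this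
      have hall : ∀ k ∈ Finset.univ, Lrep i k ≤ 0 := by
        intro k _
        rcases eq_or_ne i k with rfl | hik
        · exact (hdiag i).le
        · exact hrepOff i k hik
      have := (Finset.sum_eq_zero_iff_of_nonpos hall).mp hrow
      simpa using this j (Finset.mem_univ j)
  have hTa : 0 ≤ Latt.trace := Finset.sum_nonneg (fun i _ => hattDiag i)
  -- trace lower bound on f
  have hflower : ∀ β, ((n:ℝ) - 1) - (α/n)*Latt.trace + (β/n)*Lrep.trace ≤ n * f β := by
    intro β
    rw [hfM]
    calc ((n:ℝ) - 1) - (α/n)*Latt.trace + (β/n)*Lrep.trace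
        = (M β).trace := (htrM β).symm
      _ ≤ |(M β).trace| := le_abs_self _
      _ ≤ n * specRad (M β) := aux_abs_trace_le hn0 (M β)
  -- Part 1: nonemptiness
  have hne : {β : ℝ | 0 ≤ β ∧ 1 < f β}.Nonempty := by
    set β₀ : ℝ := (n:ℝ) * ((n:ℝ) + 1 + (α/n)*Latt.trace) / Lrep.trace with hβ₀
    have hnum : 0 ≤ (α/n)*Latt.trace := mul_nonneg (div_nonneg hα.1.le hnR.le) hTa
    have hβ₀pos : 0 ≤ β₀ := by
      apply div_nonneg _ hTr.le
      nlinarith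
    have hβval : (β₀/n)*Lrep.trace = (n:ℝ) + 1 + (α/n)*Latt.trace := by
      rw [hβ₀]
      field_simp
    refine ⟨β₀, hβ₀pos, ?_⟩
    have h1 := hflower β₀
    rw [hβval] at h1
    -- h1 : (n - 1) - (α/n)*Ta + (n + 1 + (α/n)*Ta) ≤ n * f β₀, i.e. 2n ≤ n f β₀
    nlinarith
  -- Part 2: upward closedness
  have hup : ∀ β₁ β₂, 0 ≤ β₁ → β₁ < β₂ → 1 < f β₁ → 1 < f β₂ := by
    intro β₁ β₂ hb1 hlt h1
    have hb1pos : 0 < β₁ := by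
      rcases eq_or_lt_of_le hb1 with h | h
      · exfalso; rw [← h] at h1; linarith
      · exact h
    have hb2pos : 0 < β₂ := lt_trans hb1pos hlt
    set t : ℝ := β₁ / β₂ with htdef
    have ht0 : 0 < t := div_pos hb1pos hb2pos
    have ht1 : t < 1 := (div_lt_one hb2pos).mpr hlt
    have heq : (1 - t)*0 + t*β₂ = β₁ := by
      rw [htdef]
      field_simp
      ring
    have hcv := hconv 0 β₂ (1 - t) t (by linarith) ht0.le (by ring)
    rw [heq] at hcv
    -- hcv : f β₁ ≤ (1 - t) * f 0 + t * f β₂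
    by_contra hcon
    push_neg at hcon
    nlinarith
  refine ⟨hne, hup, ?_⟩
  -- the set is bounded below
  have hbdd : BddBelow {β : ℝ | 0 ≤ β ∧ 1 < f β} := ⟨0, fun x hx => hx.1⟩
  have hnotS : ∀ γ, 0 ≤ γ → γ < βstar → f γ ≤ 1 := by
    intro γ hγ hγlt
    by_contra h
    push_neg at h
    have : βstar ≤ γ := by
      rw [hβstar]
      exact csInf_le hbdd ⟨hγ, h⟩
    linarith
  intro β hb
  constructor
  · intro hlt
    rcases eq_or_lt_of_le hb with h0 | h0
    · rw [← h0]; exact htree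
    · set β' : ℝ := (β + βstar)/2 with hβ'
      have hβ'1 : β < β' := by rw [hβ']; linarith
      have hβ'2 : β' < βstar := by rw [hβ']; linarith
      have hβ'pos : 0 < β' := lt_trans h0 hβ'1
      have hfβ' : f β' ≤ 1 := hnotS β' hβ'pos.le hβ'2
      set t : ℝ := β / β' with htdef
      have ht0 : 0 < t := div_pos h0 hβ'pos
      have ht1 : t < 1 := (div_lt_one hβ'pos).mpr hβ'1
      have heq : (1 - t)*0 + t*β' = β := by
        rw [htdef]
        field_simp
        ring
      have hcv := hconv 0 β' (1 - t) t (by linarith) ht0.le (by ring)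
      rw [heq] at hcv
      -- f β ≤ (1-t) f 0 + t f β' < (1-t) + t = 1
      nlinarith
  · intro hgt
    rw [hβstar] at hgt
    obtain ⟨x, hxS, hxlt⟩ := exists_lt_of_csInf_lt hne hgt
    exact hup x β hxS.1 hxlt hxS.2
end
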